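/- arXiv:2410.10495 — 5 statements merged into one kernel-verified Lean document; each statement's English description precedes it below -/
import Mathlib

section
/- Let P be a rank-1 orthogonal projector on A ⊗ B onto a state |ψ⟩ with Schmidt decomposition |ψ⟩ = Σᵢ αᵢ |ψᵢ¹⟩_A |ψᵢ²⟩_B (all αᵢ ≠ 0). Then the induced algebra of P on B, i.e. the C*-algebra generated by the operators {⟨i|_A P |j⟩_A} over an orthonormal basis of A, equals the full matrix algebra L(span{|ψᵢ²⟩}). -/
open Matrix

private lemma vmv_mulVec {n : Type*} [Fintype n] (v w x : n → ℂ) :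
    (vecMulVec v w).mulVec x = (w ⬝ᵥ x) • v := by
  ext k
  simp only [mulVec, vecMulVec_apply, dotProduct, Pi.smul_apply, smul_eq_mul, Finset.sum_mul]
  exact Finset.sum_congr rfl fun l _ => by ring

private lemma vmv_mul {n : Type*} [Fintype n] (v w v' w' : n → ℂ) :
    vecMulVec v w * vecMulVec v' w' = (w ⬝ᵥ v') • vecMulVec v w' := by
  ext k l
  simp only [Matrix.mul_apply, vecMulVec_apply, Matrix.smul_apply, dotProduct, smul_eq_mul,
    Finset.sum_mul]
  exact Finset.sum_congr rfl fun m _ => by ring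

private lemma vmv_star {n : Type*} (v w : n → ℂ) :
    star (vecMulVec v (star w)) = vecMulVec w (star v) := by
  ext k l
  simp [vecMulVec_apply, star_apply, mul_comm]

private lemma mulVec_sum' {n m ι : Type*} [Fintype n] (s : Finset ι) (M : Matrix m n ℂ)
    (v : ι → n → ℂ) : M.mulVec (∑ i ∈ s, v i) = ∑ i ∈ s, M.mulVec (v i) := by
  simp_rw [← Matrix.mulVecLin_apply]
  exact map_sum _ _ _

private lemma sum_mulVec' {n m ι : Type*} [Fintype n] (s : Finset ι) (M : ι → Matrix m n ℂ)
    (x : n → ℂ) : (∑ i ∈ s, M i).mulVec x = ∑ i ∈ s, (M i).mulVec x := by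
  ext j
  simp only [mulVec, dotProduct, Matrix.sum_apply, Finset.sum_apply, Finset.sum_mul]
  exact Finset.sum_comm

private lemma dot_sum' {n ι : Type*} [Fintype n] (s : Finset ι) (v : n → ℂ) (f : ι → n → ℂ) :
    v ⬝ᵥ (∑ i ∈ s, f i) = ∑ i ∈ s, v ⬝ᵥ f i := by
  simp only [dotProduct, Finset.sum_apply, Finset.mul_sum]
  exact Finset.sum_comm

/-- for a rank-1 projector `P = |ψ⟩⟨ψ|` on `A ⊗ B` with Schmidt decomposition
`|ψ⟩ = Σ_s α_s |u_s⟩|w_s⟩` (all `α_s ≠ 0`), the C*-algebra generated by the blocks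
`⟨i|_A P |j⟩_A` equals the full matrix algebra `L(span{|w_s⟩})`, realized as the set of
operators whose range lies in `span{w_s}` and which vanish on its orthogonal complement. -/
theorem induced_algebra_of_rank_one_projector
    {a b : Type*} [Fintype a] [DecidableEq a] [Fintype b] [DecidableEq b]
    {ρ : ℕ} (α : Fin ρ → ℝ) (hα : ∀ s, α s ≠ 0)
    (u : Fin ρ → (a → ℂ)) (w : Fin ρ → (b → ℂ))
    (hu : ∀ s t, star (u s) ⬝ᵥ u t = if s = t then 1 else 0)
    (hw : ∀ s t, star (w s) ⬝ᵥ w t = if s = t then 1 else 0)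
    (ψ : a × b → ℂ)
    (hψ : ∀ i k, ψ (i, k) = ∑ s, (α s : ℂ) * u s i * w s k)
    (hψnorm : star ψ ⬝ᵥ ψ = 1)
    (P : Matrix (a × b) (a × b) ℂ)
    (hP : P = vecMulVec ψ (star ψ)) :
    ((NonUnitalStarAlgebra.adjoin ℂ
        {M : Matrix b b ℂ | ∃ i j : a, M = Matrix.of fun k l => P (i, k) (j, l)} :
          NonUnitalStarSubalgebra ℂ (Matrix b b ℂ)) : Set (Matrix b b ℂ))
      = {M : Matrix b b ℂ |
          (∀ x : b → ℂ, M.mulVec x ∈ Submodule.span ℂ (Set.range w)) ∧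
          (∀ x : b → ℂ, (∀ s, star (w s) ⬝ᵥ x = 0) → M.mulVec x = 0)} := by
  classical
  set G : Set (Matrix b b ℂ) :=
    {M : Matrix b b ℂ | ∃ i j : a, M = Matrix.of fun k l => P (i, k) (j, l)} with hG
  set E : Fin ρ → Fin ρ → Matrix b b ℂ := fun s t => vecMulVec (w s) (star (w t)) with hE
  set T : Submodule ℂ (Matrix b b ℂ) :=
    Submodule.span ℂ (Set.range fun p : Fin ρ × Fin ρ => E p.1 p.2) with hT
  have hPapp : ∀ (i j : a) (k l : b), P (i, k) (j, l) = ψ (i, k) * star (ψ (j, l)) := by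
    intro i j k l; rw [hP]; rfl
  have huu : ∀ s t : Fin ρ, (∑ i, star (u s i) * u t i) = if s = t then 1 else 0 := by
    intro s t; simpa [dotProduct] using hu s t
  have hww : ∀ s t : Fin ρ, (∑ k, star (w s k) * w t k) = if s = t then 1 else 0 := by
    intro s t; simpa [dotProduct] using hw s t
  -- key contraction identities
  have key : ∀ (s : Fin ρ) (k : b), (∑ i, star (u s i) * ψ (i, k)) = (α s : ℂ) * w s k := by
    intro s k
    simp_rw [hψ, Finset.mul_sum]
    rw [Finset.sum_comm]
    calc ∑ s', ∑ i, star (u s i) * ((α s' : ℂ) * u s' i * w s' k)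
        = ∑ s', (∑ i, star (u s i) * u s' i) * ((α s' : ℂ) * w s' k) := by
          refine Finset.sum_congr rfl fun s' _ => ?_
          rw [Finset.sum_mul]
          exact Finset.sum_congr rfl fun i _ => by ring
      _ = (α s : ℂ) * w s k := by simp_rw [huu]; simp
  have hsψ : ∀ (j : a) (l : b),
      star (ψ (j, l)) = ∑ t', (α t' : ℂ) * star (u t' j) * star (w t' l) := by
    intro j l
    rw [hψ j l, star_sum]
    exact Finset.sum_congr rfl fun t' _ => by
      simp only [Complex.star_def, _root_.map_mul, Complex.conj_ofReal]
  have ckey : ∀ (t : Fin ρ) (l : b),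
      (∑ j, u t j * star (ψ (j, l))) = (α t : ℂ) * star (w t l) := by
    intro t l
    simp_rw [hsψ, Finset.mul_sum]
    rw [Finset.sum_comm]
    calc ∑ t', ∑ j, u t j * ((α t' : ℂ) * star (u t' j) * star (w t' l))
        = ∑ t', (∑ j, star (u t' j) * u t j) * ((α t' : ℂ) * star (w t' l)) := by
          refine Finset.sum_congr rfl fun t' _ => ?_
          rw [Finset.sum_mul]
          exact Finset.sum_congr rfl fun j _ => by ring
      _ = (α t : ℂ) * star (w t l) := by simp_rw [huu]; simp
  -- each generator block is a combination of the E's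
  have gen_eq : ∀ i j : a, (Matrix.of fun k l => P (i, k) (j, l)) =
      ∑ s, ∑ t, ((α s : ℂ) * (α t : ℂ) * u s i * star (u t j)) • E s t := by
    intro i j
    ext k l
    simp only [Matrix.sum_apply, Matrix.smul_apply, Matrix.of_apply, smul_eq_mul,
      hE, vecMulVec_apply, Pi.star_apply, hPapp]
    rw [hψ i k, hsψ j l, Finset.sum_mul_sum]
    exact Finset.sum_congr rfl fun s _ => Finset.sum_congr rfl fun t _ => by ring
  -- the E's are recovered from the generator blocks
  have hEB : ∀ s t : Fin ρ,
      (∑ i, ∑ j, (star (u s i) * u t j) • (Matrix.of fun k l => P (i, k) (j, l)))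
        = ((α s : ℂ) * (α t : ℂ)) • E s t := by
    intro s t
    ext k l
    simp only [Matrix.sum_apply, Matrix.smul_apply, Matrix.of_apply, smul_eq_mul, hPapp,
      hE, vecMulVec_apply, Pi.star_apply]
    calc ∑ i, ∑ j, star (u s i) * u t j * (ψ (i,k) * star (ψ (j,l)))
        = (∑ i, star (u s i) * ψ (i,k)) * (∑ j, u t j * star (ψ (j,l))) := by
          rw [Finset.sum_mul_sum]
          exact Finset.sum_congr rfl fun i _ => Finset.sum_congr rfl fun j _ => by ring
      _ = ((α s : ℂ) * w s k) * ((α t : ℂ) * star (w t l)) := by rw [key, ckey]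
      _ = (α s : ℂ) * (α t : ℂ) * (w s k * star (w t l)) := by ring
  have hEadj : ∀ s t, E s t ∈ NonUnitalStarAlgebra.adjoin ℂ G := by
    intro s t
    have h1 : ((α s : ℂ) * (α t : ℂ)) • E s t ∈ NonUnitalStarAlgebra.adjoin ℂ G := by
      rw [← hEB s t]
      refine sum_mem fun i _ => sum_mem fun j _ => SMulMemClass.smul_mem _ ?_
      exact NonUnitalStarAlgebra.subset_adjoin ℂ G ⟨i, j, rfl⟩
    have hne : ((α s : ℂ) * (α t : ℂ)) ≠ 0 := by
      simp [Complex.ofReal_eq_zero, hα s, hα t]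
    have h2 := SMulMemClass.smul_mem (((α s : ℂ) * (α t : ℂ))⁻¹) h1
    rwa [smul_smul, inv_mul_cancel₀ hne, one_smul] at h2
  -- T is closed under multiplication and star
  have hTmul : ∀ x y, x ∈ T → y ∈ T → x * y ∈ T := by
    intro x y hx hy
    refine Submodule.span_induction₂ (p := fun x y _ _ => x * y ∈ T) ?_ ?_ ?_ ?_ ?_ ?_ ?_ hx hy
    · rintro _ _ ⟨p, rfl⟩ ⟨q, rfl⟩
      rw [hE]
      dsimp only
      rw [vmv_mul]
      exact T.smul_mem _ (Submodule.subset_span ⟨(p.1, q.2), rfl⟩)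
    · intro y _; rw [zero_mul]; exact T.zero_mem
    · intro x _; rw [mul_zero]; exact T.zero_mem
    · intro x y z _ _ _ h1 h2; rw [add_mul]; exact T.add_mem h1 h2
    · intro x y z _ _ _ h1 h2; rw [mul_add]; exact T.add_mem h1 h2
    · intro c x y _ _ h; rw [smul_mul_assoc]; exact T.smul_mem _ h
    · intro c x y _ _ h; rw [mul_smul_comm]; exact T.smul_mem _ h
  have hTstar : ∀ x, x ∈ T → star x ∈ T := by
    intro x hx
    refine Submodule.span_induction ?_ ?_ ?_ ?_ hx
    · rintro _ ⟨p, rfl⟩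
      rw [hE]
      dsimp only
      rw [vmv_star]
      exact Submodule.subset_span ⟨(p.2, p.1), rfl⟩
    · rw [star_zero]; exact T.zero_mem
    · intro x y _ _ h1 h2; rw [star_add]; exact T.add_mem h1 h2
    · intro c x _ h; rw [star_smul]; exact T.smul_mem _ h
  -- T as a non-unital star subalgebra
  let Talg : NonUnitalStarSubalgebra ℂ (Matrix b b ℂ) :=
    { T.toNonUnitalSubalgebra hTmul with star_mem' := fun h => hTstar _ h }
  have hTalg : ∀ x, x ∈ Talg ↔ x ∈ T := fun x => Iff.rfl
  have hadjT : (NonUnitalStarAlgebra.adjoin ℂ G : Set (Matrix b b ℂ)) ⊆ T := by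
    intro M hM
    refine NonUnitalStarAlgebra.adjoin_le (S := Talg) ?_ hM
    rintro _ ⟨i, j, rfl⟩
    show (Matrix.of fun k l => P (i, k) (j, l)) ∈ T
    rw [gen_eq i j]
    exact T.sum_mem fun s _ => T.sum_mem fun t _ => T.smul_mem _
      (Submodule.subset_span ⟨(s, t), rfl⟩)
  have hTadj : (T : Set (Matrix b b ℂ)) ⊆ NonUnitalStarAlgebra.adjoin ℂ G := by
    intro M hM
    refine Submodule.span_induction ?_ ?_ ?_ ?_ hM
    · rintro _ ⟨p, rfl⟩; exact hEadj p.1 p.2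
    · exact zero_mem _
    · intro x y _ _ h1 h2; exact add_mem h1 h2
    · intro c x _ h; exact SMulMemClass.smul_mem c h
  -- T is contained in the right-hand side set
  have hTR : (T : Set (Matrix b b ℂ)) ⊆
      {M : Matrix b b ℂ |
        (∀ x : b → ℂ, M.mulVec x ∈ Submodule.span ℂ (Set.range w)) ∧
        (∀ x : b → ℂ, (∀ s, star (w s) ⬝ᵥ x = 0) → M.mulVec x = 0)} := by
    intro M hM
    refine Submodule.span_induction ?_ ?_ ?_ ?_ hM
    · rintro _ ⟨p, rfl⟩
      constructor
      · intro x
        rw [hE]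
        dsimp only
        rw [vmv_mulVec]
        exact Submodule.smul_mem _ _ (Submodule.subset_span ⟨p.1, rfl⟩)
      · intro x hx
        rw [hE]
        dsimp only
        rw [vmv_mulVec, hx p.2, zero_smul]
    · exact ⟨fun x => by rw [zero_mulVec]; exact zero_mem _,
        fun x _ => by rw [zero_mulVec]⟩
    · intro x y _ _ h1 h2
      exact ⟨fun v => by rw [add_mulVec]; exact add_mem (h1.1 v) (h2.1 v),
        fun v hv => by rw [add_mulVec, h1.2 v hv, h2.2 v hv, add_zero]⟩
    · intro c x _ h
      exact ⟨fun v => by rw [smul_mulVec]; exact Submodule.smul_mem _ _ (h.1 v),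
        fun v hv => by rw [smul_mulVec, h.2 v hv, smul_zero]⟩
  -- the right-hand side set is contained in T
  have hRT : {M : Matrix b b ℂ |
        (∀ x : b → ℂ, M.mulVec x ∈ Submodule.span ℂ (Set.range w)) ∧
        (∀ x : b → ℂ, (∀ s, star (w s) ⬝ᵥ x = 0) → M.mulVec x = 0)} ⊆
      (T : Set (Matrix b b ℂ)) := by
    rintro M ⟨h1, h2⟩
    set c : Fin ρ → Fin ρ → ℂ := fun s t => star (w s) ⬝ᵥ M.mulVec (w t) with hcdef
    have hMw : ∀ t : Fin ρ, M.mulVec (w t) = ∑ s, c s t • w s := by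
      intro t
      obtain ⟨d, hd⟩ := (Submodule.mem_span_range_iff_exists_fun ℂ).mp (h1 (w t))
      have hcs : ∀ s, c s t = d s := by
        intro s
        rw [hcdef]
        dsimp only
        rw [← hd, dot_sum']
        simp only [dotProduct_smul, smul_eq_mul, hw]
        simp
      conv_lhs => rw [← hd]
      exact (Finset.sum_congr rfl fun s _ => by rw [hcs s]).symm
    have hMN : ∀ x : b → ℂ, M.mulVec x =
        (∑ s, ∑ t, c s t • E s t).mulVec x := by
      intro x
      have hx' : ∀ s : Fin ρ,
          star (w s) ⬝ᵥ (x - ∑ t, (star (w t) ⬝ᵥ x) • w t) = 0 := by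
        intro s
        rw [dotProduct_sub, dot_sum']
        simp only [dotProduct_smul, smul_eq_mul, hw]
        simp
      have hz := h2 _ hx'
      rw [mulVec_sub, sub_eq_zero] at hz
      calc M.mulVec x = M.mulVec (∑ t, (star (w t) ⬝ᵥ x) • w t) := hz
        _ = ∑ t, (star (w t) ⬝ᵥ x) • M.mulVec (w t) := by
            rw [mulVec_sum']
            exact Finset.sum_congr rfl fun t _ => by rw [mulVec_smul]
        _ = ∑ t, ∑ s, (star (w t) ⬝ᵥ x) • (c s t • w s) := by
            refine Finset.sum_congr rfl fun t _ => ?_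
            rw [hMw t, Finset.smul_sum]
        _ = ∑ s, ∑ t, c s t • ((star (w t) ⬝ᵥ x) • w s) := by
            rw [Finset.sum_comm]
            exact Finset.sum_congr rfl fun s _ => Finset.sum_congr rfl fun t _ => by
              rw [smul_smul, smul_smul, mul_comm]
        _ = (∑ s, ∑ t, c s t • E s t).mulVec x := by
            rw [sum_mulVec']
            refine (Finset.sum_congr rfl fun s _ => ?_).symm
            rw [sum_mulVec']
            refine Finset.sum_congr rfl fun t _ => ?_
            rw [smul_mulVec, hE]
            dsimp only
            rw [vmv_mulVec]
    have hMeq : M = ∑ s, ∑ t, c s t • E s t := by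
      ext k l
      have h := congrFun (hMN (Pi.single l 1)) k
      simpa [mulVec_single] using h
    rw [hMeq]
    exact T.sum_mem fun s _ => T.sum_mem fun t _ => T.smul_mem _
      (Submodule.subset_span ⟨(s, t), rfl⟩)
  apply Set.Subset.antisymm
  · exact fun M hM => hTR (hadjT hM)
  · exact fun M hM => hTadj (hRT hM)
end

section
/- Let h be a Hermitian operator on A ⊗ B with two decompositions h = Σ_{ij} h_{ij} ⊗ g_{ij} = Σ_{ij} ĥ_{ij} ⊗ ĝ_{ij} where {g_{ij}} and {ĝ_{ij}} are each linearly independent families of operators on B. Then the unital *-algebras on A generated by {h_{ij}} and by {ĥ_{ij}} coincide. -/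
open Matrix
open scoped Kronecker

private lemma span_mem_of_decomp
    {a b : Type*} [Fintype a] [DecidableEq a] [Fintype b] [DecidableEq b]
    {ι κ : Type*} [Fintype ι] [Fintype κ]
    (A : ι → Matrix a a ℂ) (G : ι → Matrix b b ℂ)
    (A' : κ → Matrix a a ℂ) (G' : κ → Matrix b b ℂ)
    (hG' : LinearIndependent ℂ G')
    (heq : ∑ t, A t ⊗ₖ G t = ∑ t, A' t ⊗ₖ G' t) (s : κ) :
    A' s ∈ Submodule.span ℂ (Set.range A) := by
  classical
  -- dual functional
  obtain ⟨φ, hφ⟩ := LinearMap.exists_extend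
    ((Finsupp.lapply s) ∘ₗ (hG'.repr : _ →ₗ[ℂ] κ →₀ ℂ))
  have hφval : ∀ u : κ, φ (G' u) = if u = s then 1 else 0 := by
    intro u
    have hm : G' u ∈ Submodule.span ℂ (Set.range G') :=
      Submodule.subset_span ⟨u, rfl⟩
    have := congrFun (congrArg DFunLike.coe hφ) ⟨G' u, hm⟩
    simp only [LinearMap.comp_apply, Submodule.subtype_apply] at this
    rw [this, hG'.repr_eq_single u _ rfl]
    simp [Finsupp.lapply, Finsupp.single_apply]
  -- partial application map
  let P : Matrix (a × b) (a × b) ℂ →ₗ[ℂ] Matrix a a ℂ :=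
    { toFun := fun M => Matrix.of fun i j => φ (Matrix.of fun k l => M (i, k) (j, l))
      map_add' := by
        intro M N
        ext i j
        simp only [Matrix.of_apply, Matrix.add_apply]
        rw [← map_add]
        congr 1
      map_smul' := by
        intro c M
        ext i j
        simp only [Matrix.of_apply, Matrix.smul_apply, RingHom.id_apply]
        rw [← _root_.map_smul]
        congr 1 }
  have hPkron : ∀ (X : Matrix a a ℂ) (Y : Matrix b b ℂ), P (X ⊗ₖ Y) = φ Y • X := by
    intro X Y
    ext i j
    show φ (Matrix.of fun k l => (X ⊗ₖ Y) (i, k) (j, l)) = φ Y * X i j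
    have : (Matrix.of fun k l => (X ⊗ₖ Y) (i, k) (j, l)) = X i j • Y := by
      ext k l
      simp [Matrix.kroneckerMap_apply, mul_comm]
    rw [this, _root_.map_smul, smul_eq_mul, mul_comm]
  have h1 : P (∑ t, A t ⊗ₖ G t) = ∑ t, φ (G t) • A t := by
    rw [map_sum]; exact Finset.sum_congr rfl fun t _ => hPkron _ _
  have h2 : P (∑ t, A' t ⊗ₖ G' t) = A' s := by
    rw [map_sum]
    have : ∀ t ∈ Finset.univ, P (A' t ⊗ₖ G' t) = if t = s then A' s else 0 := by
      intro t _
      rw [hPkron, hφval]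
      split <;> simp_all
    rw [Finset.sum_congr rfl this, Finset.sum_ite_eq' Finset.univ s]
    simp
  have : A' s = ∑ t, φ (G t) • A t := by rw [← h1, heq, h2]
  rw [this]
  exact Submodule.sum_mem _ fun t _ =>
    Submodule.smul_mem _ _ (Submodule.subset_span ⟨t, rfl⟩)

private lemma adjoin_le_of_decomp
    {a b : Type*} [Fintype a] [DecidableEq a] [Fintype b] [DecidableEq b]
    {ι κ : Type*} [Fintype ι] [Fintype κ]
    (A : ι → Matrix a a ℂ) (G : ι → Matrix b b ℂ)
    (A' : κ → Matrix a a ℂ) (G' : κ → Matrix b b ℂ)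
    (hG' : LinearIndependent ℂ G')
    (heq : ∑ t, A t ⊗ₖ G t = ∑ t, A' t ⊗ₖ G' t) :
    StarAlgebra.adjoin ℂ (Set.range A') ≤ StarAlgebra.adjoin ℂ (Set.range A) := by
  apply StarAlgebra.adjoin_le
  rintro _ ⟨s, rfl⟩
  have hmem := span_mem_of_decomp A G A' G' hG' heq s
  have hsub : Submodule.span ℂ (Set.range A) ≤
      Subalgebra.toSubmodule (StarAlgebra.adjoin ℂ (Set.range A)).toSubalgebra :=
    Submodule.span_le.mpr fun x hx => StarAlgebra.subset_adjoin ℂ _ hx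
  exact hsub hmem

/-- the induced algebra is independent of the decomposition: if
`h = Σ_t A_t ⊗ G_t = Σ_t A'_t ⊗ G'_t` with each of the families `{G_t}`, `{G'_t}`
linearly independent, then the unital *-algebras generated by `{A_t}` and `{A'_t}`
coincide. -/
theorem induced_algebra_well_defined
    {a b : Type*} [Fintype a] [DecidableEq a] [Fintype b] [DecidableEq b]
    {ι κ : Type*} [Fintype ι] [Fintype κ]
    (h : Matrix (a × b) (a × b) ℂ) (hherm : h.IsHermitian)
    (A : ι → Matrix a a ℂ) (G : ι → Matrix b b ℂ)
    (A' : κ → Matrix a a ℂ) (G' : κ → Matrix b b ℂ)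
    (hG : LinearIndependent ℂ G) (hG' : LinearIndependent ℂ G')
    (hdec : h = ∑ t, A t ⊗ₖ G t)
    (hdec' : h = ∑ t, A' t ⊗ₖ G' t) :
    StarAlgebra.adjoin ℂ (Set.range A) = StarAlgebra.adjoin ℂ (Set.range A') := by
  exact le_antisymm
    (adjoin_le_of_decomp A' G' A G hG (hdec ▸ hdec'.symm ▸ rfl))
    (adjoin_le_of_decomp A G A' G' hG' (hdec' ▸ hdec.symm ▸ rfl))
end

section
/- Let P be a rank-1 projector on A ⊗ B and Q a projector on B ⊗ C commuting with P ⊗ I_C (as operators on A ⊗ B ⊗ C). Then there is an orthogonal decomposition B = B_P ⊕ B_Q such that the induced algebra of P on B equals the full algebra L(B_P) (extended by zero on B_Q), and the induced algebra of Q on B restricted to B_P consists only of scalar multiples of the identity. -/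
open Matrix

section RankOneAux

set_option linter.unusedSectionVars false

variable {a : Type*} {b : Type*} {c : Type*} [Fintype a] [DecidableEq a]
  [Fintype b] [DecidableEq b] [Fintype c] [DecidableEq c]

private lemma rankOneDecomp {m : Type*} [Fintype m] [DecidableEq m]
    (P : Matrix m m ℂ) (hPh : P.IsHermitian) (hPi : P * P = P) (hPrank : P.rank = 1) :
    ∃ u : m → ℂ, ∀ x y, P x y = u x * (starRingEnd ℂ) (u y) := by
  classical
  have hP0 : P ≠ 0 := by
    intro h; rw [h, Matrix.rank_zero] at hPrank; exact one_ne_zero hPrank.symm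
  -- v spanning the range
  simp only [Matrix.rank] at hPrank
  obtain ⟨v, hv0, hv⟩ := finrank_eq_one_iff'.mp hPrank
  -- columns are multiples of v
  have hcol : ∀ y, ∃ c : ℂ, ∀ x, P x y = c * (v : m → ℂ) x := by
    intro y
    have hmem : (fun x => P x y) ∈ LinearMap.range P.mulVecLin := by
      refine ⟨Pi.single y 1, ?_⟩
      ext x
      simp [Matrix.mulVecLin_apply, Matrix.mulVec_single]
    obtain ⟨c, hc⟩ := hv ⟨_, hmem⟩
    refine ⟨c, fun x => ?_⟩
    have := congrArg (fun (w : LinearMap.range P.mulVecLin) => (w : m → ℂ) x) hc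
    simpa using this.symm
  choose w hw using hcol
  have hvne : ∃ x₀, (v : m → ℂ) x₀ ≠ 0 := by
    by_contra h
    push_neg at h
    exact hv0 (Subtype.ext (funext h))
  obtain ⟨x₀, hx₀⟩ := hvne
  set V : m → ℂ := (v : m → ℂ)
  -- hermitian relation
  have hherm : ∀ x y, (starRingEnd ℂ) (P y x) = P x y := fun x y => by
    have := congrFun (congrFun hPh x) y
    simpa [Matrix.conjTranspose_apply] using this
  set d : ℂ := (starRingEnd ℂ) (w x₀) / V x₀ with hd
  have hwy : ∀ y, w y = d * (starRingEnd ℂ) (V y) := by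
    intro y
    have h1 : (starRingEnd ℂ) (P y x₀) = P x₀ y := hherm x₀ y
    rw [hw x₀ y, hw y x₀] at h1
    -- conj (w x₀ * V y) = w y * V x₀
    field_simp [hd]
    rw [map_mul] at h1; rw [hd, div_mul_eq_mul_div, eq_div_iff hx₀, h1]
  have hP2 : ∀ x y, P x y = d * (V x * (starRingEnd ℂ) (V y)) := by
    intro x y; rw [hw y x, hwy y]; ring
  -- d is real and positive
  have hdne : d ≠ 0 := by
    intro h
    apply hP0
    ext x y
    simp [hP2 x y, h]
  have hdreal : (starRingEnd ℂ) d = d := by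
    have h1 := hherm x₀ x₀
    rw [hP2 x₀ x₀] at h1
    have ht : (starRingEnd ℂ) (V x₀ * (starRingEnd ℂ) (V x₀)) = V x₀ * (starRingEnd ℂ) (V x₀) := by
      rw [RingHom.map_mul]; simp [mul_comm]
    rw [RingHom.map_mul, ht] at h1
    have htne : V x₀ * (starRingEnd ℂ) (V x₀) ≠ 0 := by
      simp [hx₀]
    exact mul_right_cancel₀ htne h1
  set S : ℂ := ∑ z, V z * (starRingEnd ℂ) (V z) with hS
  have hdS : d * S = 1 := by
    have h1 := congrFun (congrFun hPi x₀) x₀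
    have h2 : (P * P) x₀ x₀ = d * S * (d * (V x₀ * (starRingEnd ℂ) (V x₀))) := by
      rw [Matrix.mul_apply]
      simp only [hP2]
      rw [hS, Finset.mul_sum, Finset.sum_mul]
      exact Finset.sum_congr rfl fun z _ => by ring
    rw [h2, hP2 x₀ x₀] at h1
    have htne : d * (V x₀ * (starRingEnd ℂ) (V x₀)) ≠ 0 := by
      simp [hx₀, hdne]
    have h1' : d * S * (d * (V x₀ * (starRingEnd ℂ) (V x₀))) = 1 * (d * (V x₀ * (starRingEnd ℂ) (V x₀))) := by
      rw [one_mul]; exact h1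
    exact mul_right_cancel₀ htne h1'
  have hdim : d.im = 0 := by
    have h := congrArg Complex.im hdreal
    simp [Complex.conj_im] at h
    linarith
  have hSreal : S.im = 0 := by
    rw [hS]
    rw [Complex.im_sum]
    refine Finset.sum_eq_zero fun z _ => by simp [Complex.mul_im, Complex.conj_im, Complex.conj_re]; ring
  have hSpos : 0 ≤ S.re := by
    rw [hS, Complex.re_sum]
    refine Finset.sum_nonneg fun z _ => ?_
    simp [Complex.mul_re, Complex.conj_re, Complex.conj_im]
    nlinarith [sq_nonneg (V z).re, sq_nonneg (V z).im]
  have hdpos : 0 ≤ d.re := by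
    by_contra h
    push_neg at h
    have h1 : (d * S).re = d.re * S.re := by
      rw [Complex.mul_re, hdim, hSreal]; ring
    rw [hdS] at h1
    simp at h1
    nlinarith
  set r : ℝ := Real.sqrt d.re with hr
  have hr2 : (r : ℂ) * (r : ℂ) = d := by
    apply Complex.ext
    · rw [Complex.mul_re, Complex.ofReal_re, Complex.ofReal_im]
      rw [hr]
      rw [Real.mul_self_sqrt hdpos]
      ring
    · rw [Complex.mul_im, Complex.ofReal_re, Complex.ofReal_im, hdim]
      ring
  refine ⟨fun x => (r : ℂ) * V x, fun x y => ?_⟩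
  rw [hP2 x y]
  simp only [RingHom.map_mul, Complex.conj_ofReal]
  rw [← hr2]; ring
private lemma outer_mulVec (x w z : b → ℂ) : (Matrix.vecMulVec x w) *ᵥ z = (w ⬝ᵥ z) • x := by
  ext k
  simp [Matrix.mulVec, Matrix.vecMulVec_apply, dotProduct, Finset.mul_sum, mul_assoc]
  rw [Finset.sum_mul]
  exact Finset.sum_congr rfl fun i _ => by ring

private lemma inner_eq_dot (x y : EuclideanSpace ℂ b) :
    (inner ℂ x y : ℂ) = star (x : b → ℂ) ⬝ᵥ (y : b → ℂ) := by
  simp [PiLp.inner_apply, dotProduct, mul_comm]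

set_option maxHeartbeats 1000000 in
private lemma part1 (u : a → EuclideanSpace ℂ b) :
    ((NonUnitalStarAlgebra.adjoin ℂ
        {M : Matrix b b ℂ | ∃ i j : a, M = Matrix.of fun k l => u i k * (starRingEnd ℂ) (u j l)} :
          NonUnitalStarSubalgebra ℂ (Matrix b b ℂ)) : Set (Matrix b b ℂ))
      = {M : Matrix b b ℂ |
          LinearMap.range (Matrix.toEuclideanLin M) ≤ Submodule.span ℂ (Set.range u) ∧
          (Submodule.span ℂ (Set.range u))ᗮ ≤ LinearMap.ker (Matrix.toEuclideanLin M)} := by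
  classical
  set BP : Submodule ℂ (EuclideanSpace ℂ b) := Submodule.span ℂ (Set.range u) with hBP
  have huBP : ∀ i, u i ∈ BP := fun i => Submodule.subset_span ⟨i, rfl⟩
  have hmemRHS : ∀ M : Matrix b b ℂ,
      (LinearMap.range (Matrix.toEuclideanLin M) ≤ BP ∧
        BPᗮ ≤ LinearMap.ker (Matrix.toEuclideanLin M)) ↔
      ((∀ x : EuclideanSpace ℂ b, Matrix.toEuclideanLin M x ∈ BP) ∧
        (∀ x ∈ BPᗮ, Matrix.toEuclideanLin M x = 0)) := by
    intro M
    constructor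
    · rintro ⟨g1, g2⟩
      exact ⟨fun x => g1 ⟨x, rfl⟩, fun x hx => g2 hx⟩
    · rintro ⟨g1, g2⟩
      exact ⟨by rintro y ⟨x, rfl⟩; exact g1 x, fun x hx => g2 x hx⟩
  ext M
  simp only [Set.mem_setOf_eq, SetLike.mem_coe]
  rw [hmemRHS]
  constructor
  · intro hM
    induction hM using NonUnitalStarAlgebra.adjoin_induction with
    | mem N hN =>
      obtain ⟨i, j, rfl⟩ := hN
      have hform : (Matrix.of fun k l => u i k * (starRingEnd ℂ) (u j l))
          = Matrix.vecMulVec (u i) (star (u j : b → ℂ)) := by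
        ext k l; simp [Matrix.vecMulVec_apply]
      constructor
      · intro x
        show WithLp.toLp 2 ((Matrix.of fun k l => u i k * (starRingEnd ℂ) (u j l)) *ᵥ (x : b → ℂ)) ∈ BP
        rw [hform, outer_mulVec]
        exact Submodule.smul_mem _ _ (huBP i)
      · intro x hx
        show WithLp.toLp 2 ((Matrix.of fun k l => u i k * (starRingEnd ℂ) (u j l)) *ᵥ (x : b → ℂ)) = WithLp.toLp 2 0
        rw [hform, outer_mulVec]
        have h0 : (inner ℂ (u j) x : ℂ) = 0 :=
          (Submodule.mem_orthogonal BP x).mp hx (u j) (huBP j)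
        rw [inner_eq_dot] at h0
        rw [h0, zero_smul]
    | add N N' hN hN' ihN ihN' =>
      refine ⟨fun x => ?_, fun x hx => ?_⟩
      · show WithLp.toLp 2 ((N + N') *ᵥ (x : b → ℂ)) ∈ BP
        rw [Matrix.add_mulVec]; exact Submodule.add_mem _ (ihN.1 x) (ihN'.1 x)
      · show WithLp.toLp 2 ((N + N') *ᵥ (x : b → ℂ)) = WithLp.toLp 2 0
        rw [Matrix.add_mulVec]
        have e1 : N *ᵥ (x : b → ℂ) = 0 := congrArg WithLp.ofLp (ihN.2 x hx)
        have e2 : N' *ᵥ (x : b → ℂ) = 0 := congrArg WithLp.ofLp (ihN'.2 x hx)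
        rw [e1, e2, add_zero]
    | zero =>
      constructor
      · intro x
        show WithLp.toLp 2 ((0 : Matrix b b ℂ) *ᵥ (x : b → ℂ)) ∈ BP
        rw [Matrix.zero_mulVec]; exact Submodule.zero_mem _
      · intro x hx
        show WithLp.toLp 2 ((0 : Matrix b b ℂ) *ᵥ (x : b → ℂ)) = WithLp.toLp 2 0
        rw [Matrix.zero_mulVec]
    | mul N N' hN hN' ihN ihN' =>
      refine ⟨fun x => ?_, fun x hx => ?_⟩
      · show WithLp.toLp 2 ((N * N') *ᵥ (x : b → ℂ)) ∈ BP
        rw [← Matrix.mulVec_mulVec]; exact ihN.1 (WithLp.toLp 2 (N' *ᵥ (x : b → ℂ)))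
      · show WithLp.toLp 2 ((N * N') *ᵥ (x : b → ℂ)) = WithLp.toLp 2 0
        rw [← Matrix.mulVec_mulVec]
        have e2 : N' *ᵥ (x : b → ℂ) = 0 := congrArg WithLp.ofLp (ihN'.2 x hx)
        rw [e2, Matrix.mulVec_zero]
    | smul c N hN ihN =>
      refine ⟨fun x => ?_, fun x hx => ?_⟩
      · show WithLp.toLp 2 ((c • N) *ᵥ (x : b → ℂ)) ∈ BP
        rw [Matrix.smul_mulVec]; exact Submodule.smul_mem _ _ (ihN.1 x)
      · show WithLp.toLp 2 ((c • N) *ᵥ (x : b → ℂ)) = WithLp.toLp 2 0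
        rw [Matrix.smul_mulVec]
        have e : N *ᵥ (x : b → ℂ) = 0 := congrArg WithLp.ofLp (ihN.2 x hx)
        rw [e, smul_zero]
    | star N hN ihN =>
      have hadj : Matrix.toEuclideanLin (star N) = LinearMap.adjoint (Matrix.toEuclideanLin N) := by
        rw [Matrix.star_eq_conjTranspose, Matrix.toEuclideanLin_conjTranspose_eq_adjoint]
      refine ⟨fun x => ?_, fun x hx => ?_⟩
      · rw [hadj, ← Submodule.orthogonal_orthogonal BP]
        rw [Submodule.mem_orthogonal]
        intro w hw
        have g1 : (inner ℂ (LinearMap.adjoint (Matrix.toEuclideanLin N) x) w : ℂ)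
            = inner ℂ x (Matrix.toEuclideanLin N w) := LinearMap.adjoint_inner_left _ _ _
        have g2 : Matrix.toEuclideanLin N w = 0 := ihN.2 w hw
        rw [← inner_conj_symm, g1, g2, inner_zero_right, map_zero]
      · rw [hadj]
        have hz : ∀ y : EuclideanSpace ℂ b,
            (inner ℂ (LinearMap.adjoint (Matrix.toEuclideanLin N) x) y : ℂ) = 0 := by
          intro y
          rw [LinearMap.adjoint_inner_left]
          exact (Submodule.mem_orthogonal' BP x).mp hx _ (ihN.1 y)
        have := hz (LinearMap.adjoint (Matrix.toEuclideanLin N) x)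
        rwa [inner_self_eq_zero] at this
  · rintro ⟨h1, h2⟩
    have h1' : ∀ x : b → ℂ, WithLp.toLp 2 (M *ᵥ x) ∈ BP := fun x => h1 (WithLp.toLp 2 x)
    have h2' : ∀ x : EuclideanSpace ℂ b, x ∈ BPᗮ → M *ᵥ (x : b → ℂ) = 0 := fun x hx => congrArg WithLp.ofLp (h2 x hx)
    -- outer products of elements of BP lie in the adjoin
    have houter : ∀ x ∈ BP, ∀ y ∈ BP,
        Matrix.vecMulVec (x : b → ℂ) (star (y : b → ℂ)) ∈
          NonUnitalStarAlgebra.adjoin ℂ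
            {M : Matrix b b ℂ | ∃ i j : a, M = Matrix.of fun k l => u i k * (starRingEnd ℂ) (u j l)} := by
      have hbase : ∀ i : a, ∀ y ∈ BP,
          Matrix.vecMulVec (u i : b → ℂ) (star (y : b → ℂ)) ∈
            NonUnitalStarAlgebra.adjoin ℂ
              {M : Matrix b b ℂ | ∃ i j : a, M = Matrix.of fun k l => u i k * (starRingEnd ℂ) (u j l)} := by
        intro i y hy
        induction hy using Submodule.span_induction with
        | mem w hw =>
          obtain ⟨j, rfl⟩ := hw
          apply NonUnitalStarAlgebra.subset_adjoin
          exact ⟨i, j, by ext k l; simp [Matrix.vecMulVec_apply]⟩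
        | zero =>
          have : Matrix.vecMulVec (u i : b → ℂ) (star ((0 : EuclideanSpace ℂ b) : b → ℂ)) = 0 := by
            ext k l; simp [Matrix.vecMulVec_apply]
          rw [this]; exact zero_mem _
        | add w w' hw hw' ihw ihw' =>
          have : Matrix.vecMulVec (u i : b → ℂ) (star ((w + w' : EuclideanSpace ℂ b) : b → ℂ))
              = Matrix.vecMulVec (u i : b → ℂ) (star (w : b → ℂ))
                + Matrix.vecMulVec (u i : b → ℂ) (star (w' : b → ℂ)) := by
            ext k l; simp [Matrix.vecMulVec_apply]; ring
          rw [this]; exact add_mem ihw ihw'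
        | smul c w hw ihw =>
          have : Matrix.vecMulVec (u i : b → ℂ) (star ((c • w : EuclideanSpace ℂ b) : b → ℂ))
              = (starRingEnd ℂ c) • Matrix.vecMulVec (u i : b → ℂ) (star (w : b → ℂ)) := by
            ext k l; simp [Matrix.vecMulVec_apply, Matrix.smul_apply]; ring
          rw [this]; exact SMulMemClass.smul_mem _ ihw
      intro x hx
      induction hx using Submodule.span_induction with
      | mem w hw =>
        obtain ⟨i, rfl⟩ := hw
        exact hbase i
      | zero =>
        intro y hy
        have : Matrix.vecMulVec ((0 : EuclideanSpace ℂ b) : b → ℂ) (star (y : b → ℂ)) = 0 := by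
          ext k l; simp [Matrix.vecMulVec_apply]
        rw [this]; exact zero_mem _
      | add w w' hw hw' ihw ihw' =>
        intro y hy
        have : Matrix.vecMulVec ((w + w' : EuclideanSpace ℂ b) : b → ℂ) (star (y : b → ℂ))
            = Matrix.vecMulVec (w : b → ℂ) (star (y : b → ℂ))
              + Matrix.vecMulVec (w' : b → ℂ) (star (y : b → ℂ)) := by
          ext k l; simp [Matrix.vecMulVec_apply]; ring
        rw [this]; exact add_mem (ihw y hy) (ihw' y hy)
      | smul c w hw ihw =>
        intro y hy
        have : Matrix.vecMulVec ((c • w : EuclideanSpace ℂ b) : b → ℂ) (star (y : b → ℂ))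
            = c • Matrix.vecMulVec (w : b → ℂ) (star (y : b → ℂ)) := by
          ext k l; simp [Matrix.vecMulVec_apply, Matrix.smul_apply]; ring
        rw [this]; exact SMulMemClass.smul_mem _ (ihw y hy)
    -- orthonormal basis of BP
    set e := stdOrthonormalBasis ℂ BP with he
    set E : Fin (Module.finrank ℂ BP) → EuclideanSpace ℂ b := fun α => ((e α : BP) : EuclideanSpace ℂ b) with hEdef
    have hEBP : ∀ α, E α ∈ BP := fun α => (e α : BP).2
    have hvec : ∀ x : EuclideanSpace ℂ b,
        M *ᵥ (x : b → ℂ) = ∑ α, ((star (E α : b → ℂ)) ⬝ᵥ (x : b → ℂ)) • (M *ᵥ (E α : b → ℂ)) := by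
      intro x
      set p : EuclideanSpace ℂ b := (BP.orthogonalProjectionOnto x : EuclideanSpace ℂ b) with hp
      have hpBP : p ∈ BP := (BP.orthogonalProjectionOnto x).2
      have hq : x - p ∈ BPᗮ := BP.sub_starProjection_mem_orthogonal x
      have hMx : M *ᵥ (x : b → ℂ) = M *ᵥ (p : b → ℂ) := by
        have hx' : x = p + (x - p) := by abel
        calc M *ᵥ (x : b → ℂ) = M *ᵥ ((p + (x - p) : EuclideanSpace ℂ b) : b → ℂ) := by rw [← hx']
        _ = M *ᵥ (p : b → ℂ) + M *ᵥ ((x - p : EuclideanSpace ℂ b) : b → ℂ) := by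
              rw [← Matrix.mulVec_add, WithLp.ofLp_add]
        _ = M *ᵥ (p : b → ℂ) := by rw [h2' _ hq, add_zero]
      have hrep : p = ∑ α, (inner ℂ (E α) p : ℂ) • E α := by
        have h := congrArg (fun y : BP => (y : EuclideanSpace ℂ b))
          (e.sum_repr' (BP.orthogonalProjectionOnto x))
        simp only [AddSubmonoidClass.coe_finset_sum, SetLike.val_smul, Submodule.coe_inner] at h
        exact h.symm
      have hinner : ∀ α, (star (E α : b → ℂ)) ⬝ᵥ (x : b → ℂ) = (inner ℂ (E α) p : ℂ) := by
        intro α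
        rw [← inner_eq_dot]
        have hz0 : (inner ℂ (E α) (x - p) : ℂ) = 0 :=
          (Submodule.mem_orthogonal BP (x - p)).mp hq (E α) (hEBP α)
        have hx' : p + (x - p) = x := by abel
        rw [← hx', inner_add_right, hz0, add_zero]
      have hsum : M *ᵥ ((∑ α, (inner ℂ (E α) p : ℂ) • E α : EuclideanSpace ℂ b) : b → ℂ)
          = ∑ α, (inner ℂ (E α) p : ℂ) • (M *ᵥ (E α : b → ℂ)) := by
        have h := _root_.map_sum M.mulVecLin (fun α => (inner ℂ (E α) p : ℂ) • (E α : b → ℂ)) Finset.univ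
        simp only [LinearMap.map_smul, Matrix.mulVecLin_apply] at h
        rw [WithLp.ofLp_sum]; simp only [WithLp.ofLp_smul]
        exact h
      rw [hMx]
      conv_lhs => rw [hrep]
      rw [hsum]
      exact Finset.sum_congr rfl fun α _ => by rw [hinner]
    have hsumMV : ∀ (A : Fin (Module.finrank ℂ BP) → Matrix b b ℂ) (x : b → ℂ),
        (∑ α, A α) *ᵥ x = ∑ α, A α *ᵥ x := by
      intro A x
      ext k
      simp only [Matrix.mulVec, dotProduct, Matrix.sum_apply, Finset.sum_apply, Finset.sum_mul]
      exact Finset.sum_comm (f := fun l α => A α k l * x l)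
    have hM : M = ∑ α, Matrix.vecMulVec (M *ᵥ (E α : b → ℂ)) (star (E α : b → ℂ)) := by
      apply Matrix.toEuclideanLin.injective
      apply LinearMap.ext
      intro x
      show WithLp.toLp 2 (M *ᵥ (x : b → ℂ)) = WithLp.toLp 2 ((∑ α, Matrix.vecMulVec (M *ᵥ (E α : b → ℂ)) (star (E α : b → ℂ))) *ᵥ (x : b → ℂ))
      rw [hsumMV, hvec x]
      congr 1
      exact Finset.sum_congr rfl fun α _ => (outer_mulVec _ _ _).symm
    rw [hM]
    exact sum_mem fun α _ => houter _ (h1' _) _ (hEBP α)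
private lemma scal_span (u : a → EuclideanSpace ℂ b) (N : Matrix b b ℂ) (z : ℂ)
    (h : ∀ i, N *ᵥ (u i : b → ℂ) = z • (u i : b → ℂ)) :
    ∀ x ∈ Submodule.span ℂ (Set.range u), N *ᵥ (x : b → ℂ) = z • (x : b → ℂ) := by
  intro x hx
  induction hx using Submodule.span_induction with
  | mem w hw => obtain ⟨i, rfl⟩ := hw; exact h i
  | zero => show N *ᵥ (0 : b → ℂ) = z • (0 : b → ℂ); simp
  | add w w' hw hw' ihw ihw' =>
    show N *ᵥ ((w + w' : EuclideanSpace ℂ b) : b → ℂ) = z • ((w + w' : EuclideanSpace ℂ b) : b → ℂ)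
    show N *ᵥ ((w : b → ℂ) + (w' : b → ℂ)) = z • ((w : b → ℂ) + (w' : b → ℂ))
    rw [Matrix.mulVec_add, ihw, ihw', smul_add]
  | smul d w hw ihw =>
    show N *ᵥ (d • (w : b → ℂ)) = z • (d • (w : b → ℂ))
    rw [Matrix.mulVec_smul, ihw, smul_comm]

private lemma part2 (u : a → EuclideanSpace ℂ b) (Q : Matrix (b × c) (b × c) ℂ)
    (hQh : Q.IsHermitian)
    (heig : ∀ n n' : c, ∃ z : ℂ,
      ∀ i, (Matrix.of fun k l => Q (k, n) (l, n')) *ᵥ (u i : b → ℂ) = z • (u i : b → ℂ)) :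
    ∀ M ∈ StarAlgebra.adjoin ℂ
        {M : Matrix b b ℂ | ∃ n n' : c, M = Matrix.of fun k l => Q (k, n) (l, n')},
      ∃ z : ℂ, ∀ x ∈ Submodule.span ℂ (Set.range u),
        (Submodule.orthogonalProjectionOnto (Submodule.span ℂ (Set.range u)) (Matrix.toEuclideanLin M x)
          : EuclideanSpace ℂ b) = z • x := by
  classical
  set BP : Submodule ℂ (EuclideanSpace ℂ b) := Submodule.span ℂ (Set.range u) with hBP
  have main : ∀ M ∈ StarAlgebra.adjoin ℂ
      {M : Matrix b b ℂ | ∃ n n' : c, M = Matrix.of fun k l => Q (k, n) (l, n')},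
      (∃ z : ℂ, ∀ x ∈ BP, M *ᵥ (x : b → ℂ) = z • (x : b → ℂ)) ∧
      (∃ z : ℂ, ∀ x ∈ BP, Mᴴ *ᵥ (x : b → ℂ) = z • (x : b → ℂ)) := by
    intro M hM
    induction hM using StarAlgebra.adjoin_induction with
    | mem N hN =>
      obtain ⟨n, n', rfl⟩ := hN
      constructor
      · obtain ⟨z, hz⟩ := heig n n'
        exact ⟨z, scal_span u _ z hz⟩
      · have hconj : (Matrix.of fun k l => Q (k, n) (l, n'))ᴴ
            = Matrix.of fun k l => Q (k, n') (l, n) := by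
          ext k l
          simp only [Matrix.conjTranspose_apply, Matrix.of_apply]
          have h := congrFun (congrFun hQh (k, n')) (l, n)
          simp only [Matrix.conjTranspose_apply] at h
          exact h
        rw [hconj]
        obtain ⟨z, hz⟩ := heig n' n
        exact ⟨z, scal_span u _ z hz⟩
    | algebraMap r =>
      have halg : (algebraMap ℂ (Matrix b b ℂ)) r = r • (1 : Matrix b b ℂ) :=
        Algebra.algebraMap_eq_smul_one r
      constructor
      · exact ⟨r, fun x _ => by rw [halg, Matrix.smul_mulVec, Matrix.one_mulVec]⟩
      · refine ⟨(starRingEnd ℂ) r, fun x _ => ?_⟩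
        rw [halg, Matrix.conjTranspose_smul, Matrix.conjTranspose_one,
          Matrix.smul_mulVec, Matrix.one_mulVec]
        rfl
    | add N N' hN hN' ihN ihN' =>
      obtain ⟨⟨z1, hz1⟩, ⟨w1, hw1⟩⟩ := ihN
      obtain ⟨⟨z2, hz2⟩, ⟨w2, hw2⟩⟩ := ihN'
      constructor
      · refine ⟨z1 + z2, fun x hx => ?_⟩
        rw [Matrix.add_mulVec, hz1 x hx, hz2 x hx, add_smul]
      · refine ⟨w1 + w2, fun x hx => ?_⟩
        rw [Matrix.conjTranspose_add, Matrix.add_mulVec, hw1 x hx, hw2 x hx, add_smul]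
    | mul N N' hN hN' ihN ihN' =>
      obtain ⟨⟨z1, hz1⟩, ⟨w1, hw1⟩⟩ := ihN
      obtain ⟨⟨z2, hz2⟩, ⟨w2, hw2⟩⟩ := ihN'
      constructor
      · refine ⟨z1 * z2, fun x hx => ?_⟩
        rw [← Matrix.mulVec_mulVec, hz2 x hx]
        have hmem : (z2 • x : EuclideanSpace ℂ b) ∈ BP := Submodule.smul_mem _ _ hx
        have := hz1 _ hmem
        rw [← WithLp.ofLp_smul, this, WithLp.ofLp_smul]
        rw [smul_smul, mul_comm z1 z2, ← smul_smul]
      · refine ⟨w2 * w1, fun x hx => ?_⟩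
        rw [Matrix.conjTranspose_mul, ← Matrix.mulVec_mulVec, hw1 x hx]
        have hmem : (w1 • x : EuclideanSpace ℂ b) ∈ BP := Submodule.smul_mem _ _ hx
        have := hw2 _ hmem
        rw [← WithLp.ofLp_smul, this, WithLp.ofLp_smul, smul_smul, mul_comm w2 w1, ← smul_smul]
    | star N hN ihN =>
      obtain ⟨⟨z1, hz1⟩, ⟨w1, hw1⟩⟩ := ihN
      constructor
      · refine ⟨w1, fun x hx => ?_⟩
        rw [Matrix.star_eq_conjTranspose]
        exact hw1 x hx
      · refine ⟨z1, fun x hx => ?_⟩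
        rw [Matrix.star_eq_conjTranspose, Matrix.conjTranspose_conjTranspose]
        exact hz1 x hx
  intro M hM
  obtain ⟨⟨z, hz⟩, -⟩ := main M hM
  refine ⟨z, fun x hx => ?_⟩
  have h0 : Matrix.toEuclideanLin M x = (z • x : EuclideanSpace ℂ b) := congrArg (WithLp.toLp 2) (hz x hx)
  rw [h0]
  have hmem : (z • x : EuclideanSpace ℂ b) ∈ BP := Submodule.smul_mem _ _ hx
  exact congrArg Subtype.val (Submodule.orthogonalProjectionOnto_mem_subspace_eq_self (⟨z • x, hmem⟩ : BP))
private lemma heig_of (u : a → EuclideanSpace ℂ b) (Q : Matrix (b × c) (b × c) ℂ)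
    (j₀ : a) (k₀ : b) (hu : u j₀ k₀ ≠ 0)
    (key : ∀ (i j : a) (k l : b) (n n' : c),
      u i k * (∑ l₂, (starRingEnd ℂ) (u j l₂) * Q (l₂, n) (l, n'))
        = (∑ l₂, Q (k, n) (l₂, n') * u i l₂) * (starRingEnd ℂ) (u j l)) :
    ∀ n n' : c, ∃ z : ℂ,
      ∀ i, (Matrix.of fun k l => Q (k, n) (l, n')) *ᵥ (u i : b → ℂ) = z • (u i : b → ℂ) := by
  intro n n'
  refine ⟨(∑ l₂, (starRingEnd ℂ) (u j₀ l₂) * Q (l₂, n) (k₀, n')) / (starRingEnd ℂ) (u j₀ k₀),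
    fun i => ?_⟩
  ext k
  have h := key i j₀ k k₀ n n'
  have hc : (starRingEnd ℂ) (u j₀ k₀) ≠ 0 := by simpa using hu
  show (∑ l₂, (Matrix.of fun k l => Q (k, n) (l, n')) k l₂ * u i l₂) = _
  simp only [Matrix.of_apply, Pi.smul_apply, smul_eq_mul]
  rw [div_mul_eq_mul_div, eq_div_iff hc]
  linear_combination -h

end RankOneAux

/-- for a rank-1 projector `P` on `A ⊗ B` commuting (on `A ⊗ B ⊗ C`) with a
projector `Q` on `B ⊗ C`, there is an orthogonal decomposition `B = B_P ⊕ B_Pᗮ` such that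
the induced algebra of `P` on `B` is the full algebra on `B_P` (extended by zero on
`B_Pᗮ`), while the induced algebra of `Q` on `B`, compressed to `B_P`, consists only of
scalar multiples of the identity on `B_P`. -/
theorem rank_one_induced_algebra_structure
    {a b c : Type*} [Fintype a] [DecidableEq a] [Fintype b] [DecidableEq b]
    [Fintype c] [DecidableEq c]
    (P : Matrix (a × b) (a × b) ℂ) (Q : Matrix (b × c) (b × c) ℂ)
    (hPh : P.IsHermitian) (hPi : P * P = P) (hPrank : P.rank = 1)
    (hQh : Q.IsHermitian) (hQi : Q * Q = Q)
    (hcomm :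
      (Matrix.of fun x y : a × b × c =>
          P (x.1, x.2.1) (y.1, y.2.1) * (if x.2.2 = y.2.2 then (1 : ℂ) else 0)) *
        (Matrix.of fun x y : a × b × c =>
          (if x.1 = y.1 then (1 : ℂ) else 0) * Q (x.2.1, x.2.2) (y.2.1, y.2.2))
      = (Matrix.of fun x y : a × b × c =>
          (if x.1 = y.1 then (1 : ℂ) else 0) * Q (x.2.1, x.2.2) (y.2.1, y.2.2)) *
        (Matrix.of fun x y : a × b × c =>
          P (x.1, x.2.1) (y.1, y.2.1) * (if x.2.2 = y.2.2 then (1 : ℂ) else 0))) :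
    ∃ BP : Submodule ℂ (EuclideanSpace ℂ b),
      ((NonUnitalStarAlgebra.adjoin ℂ
          {M : Matrix b b ℂ | ∃ i j : a, M = Matrix.of fun k l => P (i, k) (j, l)} :
            NonUnitalStarSubalgebra ℂ (Matrix b b ℂ)) : Set (Matrix b b ℂ))
        = {M : Matrix b b ℂ |
            LinearMap.range (Matrix.toEuclideanLin M) ≤ BP ∧
            BPᗮ ≤ LinearMap.ker (Matrix.toEuclideanLin M)} ∧
      (∀ M ∈ StarAlgebra.adjoin ℂ
          {M : Matrix b b ℂ | ∃ n n' : c, M = Matrix.of fun k l => Q (k, n) (l, n')},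
        ∃ z : ℂ, ∀ x ∈ BP,
          (Submodule.orthogonalProjectionOnto BP (Matrix.toEuclideanLin M x) : EuclideanSpace ℂ b)
            = z • x) := by
  classical
  obtain ⟨v, hv⟩ := rankOneDecomp P hPh hPi hPrank
  set u : a → EuclideanSpace ℂ b := fun i => WithLp.toLp 2 (fun k => v (i, k)) with hu
  have hPu : ∀ (i j : a) (k l : b), P (i, k) (j, l) = u i k * (starRingEnd ℂ) (u j l) :=
    fun i j k l => hv (i, k) (j, l)
  have hP0 : P ≠ 0 := by
    intro h; rw [h, Matrix.rank_zero] at hPrank; exact one_ne_zero hPrank.symm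
  have hex : ∃ (j₀ : a) (k₀ : b), u j₀ k₀ ≠ 0 := by
    by_contra h
    push_neg at h
    apply hP0
    ext x y
    have hx := h x.1 x.2
    have : v x = 0 := by rwa [hu] at hx
    rw [hv x y, this, zero_mul, Matrix.zero_apply]
  obtain ⟨j₀, k₀, hj⟩ := hex
  have hQkey : ∀ (i j : a) (k l : b) (n n' : c),
      u i k * (∑ l₂, (starRingEnd ℂ) (u j l₂) * Q (l₂, n) (l, n'))
        = (∑ l₂, Q (k, n) (l₂, n') * u i l₂) * (starRingEnd ℂ) (u j l) := by
    intro i j k l n n'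
    have h := congrFun (congrFun hcomm (i, k, n)) (j, l, n')
    simp only [Matrix.mul_apply, Matrix.of_apply, Fintype.sum_prod_type] at h
    simp only [mul_ite, ite_mul, mul_one, one_mul, mul_zero, zero_mul, Finset.sum_ite_irrel,
      Finset.sum_ite_eq, Finset.sum_ite_eq', Finset.mem_univ, if_true, Finset.sum_const_zero,
      add_zero, zero_add] at h
    calc u i k * ∑ l₂, (starRingEnd ℂ) (u j l₂) * Q (l₂, n) (l, n')
        = ∑ l₂, P (i, k) (j, l₂) * Q (l₂, n) (l, n') := by
          rw [Finset.mul_sum]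
          exact Finset.sum_congr rfl fun l₂ _ => by rw [hPu]; ring
      _ = ∑ l₂, Q (k, n) (l₂, n') * P (i, l₂) (j, l) := h
      _ = (∑ l₂, Q (k, n) (l₂, n') * u i l₂) * (starRingEnd ℂ) (u j l) := by
          rw [Finset.sum_mul]
          exact Finset.sum_congr rfl fun l₂ _ => by rw [hPu]; ring
  have hset : {M : Matrix b b ℂ | ∃ i j : a, M = Matrix.of fun k l => P (i, k) (j, l)}
      = {M : Matrix b b ℂ | ∃ i j : a,
          M = Matrix.of fun k l => u i k * (starRingEnd ℂ) (u j l)} := by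
    ext M
    constructor
    · rintro ⟨i, j, rfl⟩
      exact ⟨i, j, by ext k l; simp only [Matrix.of_apply]; exact hPu i j k l⟩
    · rintro ⟨i, j, rfl⟩
      exact ⟨i, j, by ext k l; simp only [Matrix.of_apply]; exact (hPu i j k l).symm⟩
  refine ⟨Submodule.span ℂ (Set.range u), ?_, ?_⟩
  · rw [hset]
    exact part1 u
  · exact part2 u Q hQh (heig_of u Q j₀ k₀ hj hQkey)
end

section
/- Let P on A ⊗ B and Q on B ⊗ C be commuting rank-1 orthogonal projectors (acting as identity on the remaining factors of A ⊗ B ⊗ C). Then exactly one of the following holds: (singular case) there is a unit vector |ψ⟩ ∈ B and rank-1 projectors P̃ on A, Q̃ on C with P = P̃ ⊗ |ψ⟩⟨ψ| and Q = |ψ⟩⟨ψ| ⊗ Q̃; or (reducing case) there exists a Hermitian projector Π on B such that (I_A ⊗ Π) P (I_A ⊗ Π) = P and (Π ⊗ I_C) Q (Π ⊗ I_C) = 0. -/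
open Matrix
open scoped Kronecker ComplexConjugate

section Aux

variable {m n p : Type*}

lemma RKmul_vecMulVec [Fintype p] (M : Matrix m p ℂ) (u : p → ℂ) (w : n → ℂ) :
    M * vecMulVec u w = vecMulVec (M *ᵥ u) w := by
  ext i j
  simp [Matrix.mul_apply, vecMulVec_apply, Matrix.mulVec, dotProduct, Finset.sum_mul, mul_assoc]

lemma RKvecMulVec_mul [Fintype p] (u : m → ℂ) (w : p → ℂ) (M : Matrix p n ℂ) :
    vecMulVec u w * M = vecMulVec u (w ᵥ* M) := by
  ext i j
  simp [Matrix.mul_apply, vecMulVec_apply, Matrix.vecMul, dotProduct, Finset.mul_sum, mul_assoc]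

lemma RKvecMulVec_mulVec [Fintype p] (u : m → ℂ) (w : p → ℂ) (x : p → ℂ) :
    vecMulVec u w *ᵥ x = (w ⬝ᵥ x) • u := by
  ext i
  simp only [Matrix.mulVec, dotProduct, vecMulVec_apply, Pi.smul_apply, smul_eq_mul,
    Finset.sum_mul]
  exact Finset.sum_congr rfl fun j _ => by ring

lemma RKsandwich_herm [Fintype n] (Pr : Matrix n n ℂ) (h : Pr.IsHermitian) (ψ : n → ℂ) :
    Pr * vecMulVec ψ (star ψ) * Pr = vecMulVec (Pr *ᵥ ψ) (star (Pr *ᵥ ψ)) := by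
  rw [RKmul_vecMulVec, RKvecMulVec_mul, star_mulVec, show Prᴴ = Pr from h]

lemma RKvecMulVec_herm [Fintype n] (v : n → ℂ) : (vecMulVec v (star v)).IsHermitian := by
  ext i j
  simp [vecMulVec_apply, conjTranspose_apply, mul_comm]

lemma RKvecMulVec_idem [Fintype n] (v : n → ℂ) (hv : star v ⬝ᵥ v = 1) :
    vecMulVec v (star v) * vecMulVec v (star v) = vecMulVec v (star v) := by
  rw [RKmul_vecMulVec, RKvecMulVec_mulVec, hv, one_smul]

lemma RKvecMulVec_rank_one [Fintype n] [DecidableEq n] (v : n → ℂ) (hv : star v ⬝ᵥ v = 1) :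
    (vecMulVec v (star v)).rank = 1 := by
  have hvne : v ≠ 0 := by
    intro h; rw [h] at hv; simp at hv
  have hrange : LinearMap.range (vecMulVec v (star v)).mulVecLin = ℂ ∙ v := by
    apply le_antisymm
    · rintro _ ⟨x, rfl⟩
      rw [mulVecLin_apply, RKvecMulVec_mulVec]
      exact Submodule.smul_mem _ _ (Submodule.mem_span_singleton_self v)
    · rw [Submodule.span_singleton_le_iff_mem]
      exact ⟨v, by rw [mulVecLin_apply, RKvecMulVec_mulVec, hv, one_smul]⟩
  rw [Matrix.rank, hrange, finrank_span_singleton hvne]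

lemma RKexists_unit_vec {n : Type*} [Fintype n] [DecidableEq n]
    (M : Matrix n n ℂ) (hh : M.IsHermitian) (hi : M * M = M) (hr : M.rank = 1) :
    ∃ v : n → ℂ, star v ⬝ᵥ v = 1 ∧ M = vecMulVec v (star v) := by
  classical
  have h1 : Module.finrank ℂ (LinearMap.range M.mulVecLin) = 1 := hr
  rw [finrank_eq_one_iff'] at h1
  obtain ⟨⟨v₀, hv₀mem⟩, hv₀ne, hspan⟩ := h1
  have hv₀ne' : v₀ ≠ 0 := fun h => hv₀ne (Subtype.ext h)
  have hcol : ∀ j, ∃ c : ℂ, ∀ i, M i j = c * v₀ i := by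
    intro j
    have hmem : (fun i => M i j) ∈ LinearMap.range M.mulVecLin := by
      refine ⟨Pi.single j 1, ?_⟩
      ext i
      simp [mulVecLin_apply, Matrix.mulVec_single]
    obtain ⟨c, hc⟩ := hspan ⟨_, hmem⟩
    exact ⟨c, fun i => by
      have := congrFun (congrArg Subtype.val hc) i
      simpa using this.symm⟩
  choose c hc using hcol
  obtain ⟨i₀, hi₀⟩ := Function.ne_iff.mp hv₀ne'
  have hi₀' : v₀ i₀ ≠ 0 := by simpa using hi₀
  set k : ℂ := conj (c i₀) / v₀ i₀ with hk
  have hck : ∀ j, c j = k * conj (v₀ j) := by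
    intro j
    have h2 : M i₀ j = conj (M j i₀) := by
      conv_lhs => rw [← hh]
      simp [conjTranspose_apply]
    rw [hc j i₀, hc i₀ j] at h2
    rw [_root_.map_mul] at h2
    field_simp [hk]
    have hinv := mul_inv_cancel₀ hi₀'
    linear_combination (v₀ i₀)⁻¹ * h2 - c j * hinv
  have hM : ∀ i j, M i j = k * (v₀ i * conj (v₀ j)) := by
    intro i j; rw [hc j i, hck j]; ring
  set tR : ℝ := ∑ l, Complex.normSq (v₀ l) with htR
  have ht : (star v₀ ⬝ᵥ v₀ : ℂ) = (tR : ℝ) := by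
    rw [dotProduct, htR]
    push_cast
    exact Finset.sum_congr rfl fun l _ => by
      simp [Complex.normSq_eq_conj_mul_self]
  have hkne : k ≠ 0 := by
    intro h
    have hM0 : M = 0 := by ext i j; simp [hM i j, h]
    rw [hM0, Matrix.rank_zero] at hr; exact one_ne_zero hr.symm
  have hXne : v₀ i₀ * conj (v₀ i₀) ≠ 0 :=
    mul_ne_zero hi₀' (by simpa using hi₀')
  have hkt : k * (tR : ℂ) = 1 := by
    have h3 : (M * M) i₀ i₀ = M i₀ i₀ := by rw [hi]
    have h4 : (M * M) i₀ i₀ = (k * (tR : ℂ)) * (k * (v₀ i₀ * conj (v₀ i₀))) := by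
      rw [Matrix.mul_apply, ← ht, dotProduct, Finset.mul_sum, Finset.sum_mul]
      refine Finset.sum_congr rfl fun l _ => ?_
      rw [hM i₀ l, hM l i₀]
      simp only [Pi.star_apply, RCLike.star_def]
      ring
    rw [h4, hM i₀ i₀] at h3
    exact mul_right_cancel₀ (mul_ne_zero hkne hXne) (by linear_combination h3)
  have htRne : (tR : ℂ) ≠ 0 := fun h => by rw [h, mul_zero] at hkt; exact zero_ne_one hkt
  have htRnonneg : 0 ≤ tR := Finset.sum_nonneg fun l _ => Complex.normSq_nonneg _
  set s : ℝ := Real.sqrt tR with hs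
  have hs2 : (s : ℂ) * s = (tR : ℂ) := by
    rw [← Complex.ofReal_mul, Real.mul_self_sqrt htRnonneg]
  have hsne : (s : ℂ) ≠ 0 := fun h => htRne (by rw [← hs2, h, mul_zero])
  refine ⟨((s : ℂ))⁻¹ • v₀, ?_, ?_⟩
  · rw [star_smul, smul_dotProduct, dotProduct_smul, ht]
    simp only [star_inv₀, RCLike.star_def, Complex.conj_ofReal, smul_eq_mul]
    field_simp
    rw [← hs2]; ring
  · ext i j
    rw [hM i j]
    simp only [vecMulVec_apply, Pi.smul_apply, Pi.star_apply, smul_eq_mul, RCLike.star_def,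
      _root_.map_mul, map_inv₀, Complex.conj_ofReal]
    have hkval : k = ((tR : ℂ))⁻¹ := eq_inv_of_mul_eq_one_left (by linear_combination hkt)
    rw [hkval, ← hs2]
    field_simp
    try ring

lemma RKexists_projection {b : Type*} [Fintype b] [DecidableEq b]
    {ι κ : Type*} (r : ι → (b → ℂ)) (cw : κ → (b → ℂ))
    (horth : ∀ i k, star (r i) ⬝ᵥ cw k = 0) :
    ∃ Pr : Matrix b b ℂ, Pr.IsHermitian ∧ Pr * Pr = Pr ∧
      (∀ i, Pr *ᵥ r i = r i) ∧ (∀ k, Pr *ᵥ cw k = 0) := by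
  classical
  set E := EuclideanSpace ℂ b
  set e := WithLp.equiv 2 (b → ℂ)
  set S : Submodule ℂ E := Submodule.span ℂ (Set.range fun i => e.symm (r i)) with hS
  set pC : E →L[ℂ] E := S.subtypeL ∘L S.orthogonalProjection with hpC
  set Pr : Matrix b b ℂ := Matrix.toEuclideanLin.symm (pC : E →ₗ[ℂ] E) with hPr
  have key : Matrix.toEuclideanLin Pr = (pC : E →ₗ[ℂ] E) := by
    rw [hPr, LinearEquiv.apply_symm_apply]
  have hmv : ∀ u : b → ℂ, Pr *ᵥ u = e (pC (e.symm u)) := by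
    intro u
    have := congrArg (fun f : E →ₗ[ℂ] E => e (f (e.symm u))) key
    exact this
  refine ⟨Pr, ?_, ?_, ?_, ?_⟩
  · rw [Matrix.isHermitian_iff_isSymmetric, key]
    exact S.starProjection_isSymmetric
  · have hcomp : Matrix.toEuclideanLin (Pr * Pr)
        = (Matrix.toEuclideanLin Pr).comp (Matrix.toEuclideanLin Pr) := by
      apply LinearMap.ext
      intro x
      simp [Matrix.toEuclideanLin_apply, Matrix.mulVec_mulVec]
    have hpp : (pC : E →ₗ[ℂ] E).comp (pC : E →ₗ[ℂ] E) = (pC : E →ₗ[ℂ] E) := by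
      apply LinearMap.ext
      intro x
      show pC (pC x) = pC x
      exact Submodule.starProjection_eq_self_iff.mpr (Submodule.coe_mem (S.orthogonalProjectionOnto x))
    apply Matrix.toEuclideanLin.injective
    rw [hcomp, key, hpp]
  · intro i
    rw [hmv]
    have hmem : e.symm (r i) ∈ S := Submodule.subset_span ⟨i, rfl⟩
    have : pC (e.symm (r i)) = e.symm (r i) := by
      rw [hpC]
      exact Submodule.starProjection_eq_self_iff.mpr hmem
    rw [this]; exact e.apply_symm_apply _
  · intro k
    have hmem : e.symm (cw k) ∈ Sᗮ := by
      rw [Submodule.mem_orthogonal]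
      intro u hu
      induction hu using Submodule.span_induction with
      | mem x hx =>
        obtain ⟨i, rfl⟩ := hx
        have : (inner ℂ (e.symm (r i)) (e.symm (cw k)) : ℂ) = star (r i) ⬝ᵥ cw k := by
          simp [PiLp.inner_apply, RCLike.inner_apply, dotProduct,
            WithLp.equiv_symm_apply]
          exact Finset.sum_congr rfl fun x _ => mul_comm _ _
        rw [this, horth]
      | zero => simp
      | add x y _ _ hx hy => rw [inner_add_left, hx, hy, add_zero]
      | smul c x _ hx => rw [inner_smul_left, hx, mul_zero]
    have : pC (e.symm (cw k)) = 0 := by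
      rw [hpC]
      simp [Submodule.orthogonalProjectionOnto_apply_of_mem_orthogonal hmem]
    rw [hmv, this]
    rfl

lemma RKkron_herm {A : Matrix m m ℂ} {B : Matrix n n ℂ}
    (hA : A.IsHermitian) (hB : B.IsHermitian) : (A ⊗ₖ B).IsHermitian := by
  ext ⟨i,j⟩ ⟨k,l⟩
  show star (A k i * B l j) = A i k * B j l
  rw [star_mul', ← conjTranspose_apply, ← conjTranspose_apply,
    show Aᴴ = A from hA, show Bᴴ = B from hB]

lemma RKmatrix_exists_ne_zero {M : Matrix m n ℂ} (h : M ≠ 0) :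
    ∃ i j, M i j ≠ 0 := by
  by_contra hc
  push_neg at hc
  exact h (Matrix.ext fun i j => hc i j)

end Aux

lemma RKsingular_not_reducing {a b c : Type*} [Fintype a] [DecidableEq a] [Fintype b]
    [DecidableEq b] [Fintype c] [DecidableEq c]
    (P : Matrix (a × b) (a × b) ℂ) (Q : Matrix (b × c) (b × c) ℂ)
    (hsing : ∃ (ψ : b → ℂ) (Pt : Matrix a a ℂ) (Qt : Matrix c c ℂ),
        star ψ ⬝ᵥ ψ = 1 ∧ Pt.IsHermitian ∧ Pt * Pt = Pt ∧ Pt.rank = 1 ∧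
        Qt.IsHermitian ∧ Qt * Qt = Qt ∧ Qt.rank = 1 ∧
        P = Pt ⊗ₖ vecMulVec ψ (star ψ) ∧ Q = vecMulVec ψ (star ψ) ⊗ₖ Qt)
    (hred : ∃ Pr : Matrix b b ℂ, Pr.IsHermitian ∧ Pr * Pr = Pr ∧
        ((1 : Matrix a a ℂ) ⊗ₖ Pr) * P * ((1 : Matrix a a ℂ) ⊗ₖ Pr) = P ∧
        (Pr ⊗ₖ (1 : Matrix c c ℂ)) * Q * (Pr ⊗ₖ (1 : Matrix c c ℂ)) = 0) : False := by
  obtain ⟨ψ, Pt, Qt, hψ1, _, _, hPtr, _, _, hQtr, hP, hQ⟩ := hsing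
  obtain ⟨Pr, hPrh, _, hP', hQ'⟩ := hred
  set u := Pr *ᵥ ψ with hu
  have hPtne : Pt ≠ 0 := by
    intro h; rw [h, Matrix.rank_zero] at hPtr; exact one_ne_zero hPtr.symm
  have hQtne : Qt ≠ 0 := by
    intro h; rw [h, Matrix.rank_zero] at hQtr; exact one_ne_zero hQtr.symm
  obtain ⟨a₀, a₀', hPt0⟩ := RKmatrix_exists_ne_zero hPtne
  obtain ⟨γ₀, γ₀', hQt0⟩ := RKmatrix_exists_ne_zero hQtne
  have h1 : Pt ⊗ₖ vecMulVec u (star u) = Pt ⊗ₖ vecMulVec ψ (star ψ) := by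
    calc Pt ⊗ₖ vecMulVec u (star u)
        = ((1 : Matrix a a ℂ) * Pt * 1) ⊗ₖ (Pr * vecMulVec ψ (star ψ) * Pr) := by
          rw [RKsandwich_herm Pr hPrh ψ, one_mul, mul_one]
      _ = ((1 : Matrix a a ℂ) ⊗ₖ Pr) * P * ((1 : Matrix a a ℂ) ⊗ₖ Pr) := by
          rw [hP, Matrix.mul_kronecker_mul, Matrix.mul_kronecker_mul]
      _ = Pt ⊗ₖ vecMulVec ψ (star ψ) := by rw [hP', hP]
  have h2 : vecMulVec u (star u) ⊗ₖ Qt = 0 := by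
    calc vecMulVec u (star u) ⊗ₖ Qt
        = (Pr * vecMulVec ψ (star ψ) * Pr) ⊗ₖ ((1 : Matrix c c ℂ) * Qt * 1) := by
          rw [RKsandwich_herm Pr hPrh ψ, one_mul, mul_one]
      _ = (Pr ⊗ₖ (1 : Matrix c c ℂ)) * Q * (Pr ⊗ₖ (1 : Matrix c c ℂ)) := by
          rw [hQ, Matrix.mul_kronecker_mul, Matrix.mul_kronecker_mul]
      _ = 0 := hQ'
  have huψ : ∀ β β', u β * star (u β') = ψ β * star (ψ β') := by
    intro β β'
    have := congrFun (congrFun h1 (a₀, β)) (a₀', β')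
    simp only [kroneckerMap_apply, vecMulVec_apply, Pi.star_apply] at this
    exact mul_left_cancel₀ hPt0 this
  have hu0 : ∀ β β', u β * star (u β') = 0 := by
    intro β β'
    have := congrFun (congrFun h2 (β, γ₀)) (β', γ₀')
    simp only [kroneckerMap_apply, vecMulVec_apply, Pi.star_apply, Matrix.zero_apply] at this
    rcases mul_eq_zero.mp this with h | h
    · exact h
    · exact absurd h hQt0
  have : (1 : ℂ) = 0 := by
    rw [← hψ1, dotProduct]
    refine Finset.sum_eq_zero fun β _ => ?_
    have := (huψ β β).symm.trans (hu0 β β)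
    simp only [Pi.star_apply]
    rw [mul_comm]
    exact this
  exact one_ne_zero this

/-- two commuting rank-1 projectors `P` on `A ⊗ B` and `Q` on `B ⊗ C`
commute in exactly one of two ways: the singular way, where both factor through the same
state `|ψ⟩` on `B`, or the reducing way, where some projector `Π` on `B` preserves `P`
and annihilates `Q`. -/
theorem rank_one_commutation_dichotomy
    {a b c : Type*} [Fintype a] [DecidableEq a] [Fintype b] [DecidableEq b]
    [Fintype c] [DecidableEq c]
    (P : Matrix (a × b) (a × b) ℂ) (Q : Matrix (b × c) (b × c) ℂ)
    (hPh : P.IsHermitian) (hPi : P * P = P) (hPrank : P.rank = 1)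
    (hQh : Q.IsHermitian) (hQi : Q * Q = Q) (hQrank : Q.rank = 1)
    (hcomm :
      (Matrix.of fun x y : a × b × c =>
          P (x.1, x.2.1) (y.1, y.2.1) * (if x.2.2 = y.2.2 then (1 : ℂ) else 0)) *
        (Matrix.of fun x y : a × b × c =>
          (if x.1 = y.1 then (1 : ℂ) else 0) * Q (x.2.1, x.2.2) (y.2.1, y.2.2))
      = (Matrix.of fun x y : a × b × c =>
          (if x.1 = y.1 then (1 : ℂ) else 0) * Q (x.2.1, x.2.2) (y.2.1, y.2.2)) *
        (Matrix.of fun x y : a × b × c =>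
          P (x.1, x.2.1) (y.1, y.2.1) * (if x.2.2 = y.2.2 then (1 : ℂ) else 0))) :
    Xor'
      -- singular commutation
      (∃ (ψ : b → ℂ) (Pt : Matrix a a ℂ) (Qt : Matrix c c ℂ),
        star ψ ⬝ᵥ ψ = 1 ∧
        Pt.IsHermitian ∧ Pt * Pt = Pt ∧ Pt.rank = 1 ∧
        Qt.IsHermitian ∧ Qt * Qt = Qt ∧ Qt.rank = 1 ∧
        P = Pt ⊗ₖ vecMulVec ψ (star ψ) ∧ Q = vecMulVec ψ (star ψ) ⊗ₖ Qt)
      -- reducing commutation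
      (∃ Pr : Matrix b b ℂ, Pr.IsHermitian ∧ Pr * Pr = Pr ∧
        ((1 : Matrix a a ℂ) ⊗ₖ Pr) * P * ((1 : Matrix a a ℂ) ⊗ₖ Pr) = P ∧
        (Pr ⊗ₖ (1 : Matrix c c ℂ)) * Q * (Pr ⊗ₖ (1 : Matrix c c ℂ)) = 0) := by
  classical
  obtain ⟨v, hv1, hvP⟩ := RKexists_unit_vec P hPh hPi hPrank
  obtain ⟨w, hw1, hwQ⟩ := RKexists_unit_vec Q hQh hQi hQrank
  have hE : ∀ (a1 a2 : a) (β β' : b) (γ γ' : c),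
      (∑ β'' : b, P (a1,β) (a2,β'') * Q (β'',γ) (β',γ'))
      = ∑ β'' : b, Q (β,γ) (β'',γ') * P (a1,β'') (a2,β') := by
    intro a1 a2 β β' γ γ'
    have h := congrFun (congrFun hcomm (a1,(β,γ))) (a2,(β',γ'))
    simp only [Matrix.mul_apply, Matrix.of_apply, Fintype.sum_prod_type] at h
    simp only [mul_ite, ite_mul, one_mul, mul_one, zero_mul, mul_zero] at h
    have hLHS : (∑ x : a, ∑ x1 : b, ∑ x2 : c,
        if x = a2 then if γ = x2 then P (a1,β) (x,x1) * Q (x1,x2) (β',γ') else 0 else 0)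
        = ∑ β'' : b, P (a1,β) (a2,β'') * Q (β'',γ) (β',γ') := by
      rw [Finset.sum_eq_single a2]
      · exact Finset.sum_congr rfl fun x1 _ => by simp [Finset.sum_ite_eq]
      · intro x _ hx; simp [hx]
      · intro hx; exact absurd (Finset.mem_univ a2) hx
    have hRHS : (∑ x : a, ∑ x1 : b, ∑ x2 : c,
        if x2 = γ' then if a1 = x then Q (β,γ) (x1,x2) * P (x,x1) (a2,β') else 0 else 0)
        = ∑ β'' : b, Q (β,γ) (β'',γ') * P (a1,β'') (a2,β') := by
      rw [Finset.sum_eq_single a1]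
      · exact Finset.sum_congr rfl fun x1 _ => by simp [Finset.sum_ite_eq']
      · intro x _ hx; simp [Ne.symm hx]
      · intro hx; exact absurd (Finset.mem_univ a1) hx
    rw [← hLHS, ← hRHS]
    exact h
  set T : a → c → ℂ := fun a1 γ => ∑ β, conj (v (a1,β)) * w (β,γ) with hT
  have hE' : ∀ (a1 a2 : a) (β β' : b) (γ γ' : c),
      v (a1,β) * conj (w (β',γ')) * T a2 γ
      = conj (v (a2,β')) * w (β,γ) * conj (T a1 γ') := by
    intro a1 a2 β β' γ γ'
    have h := hE a1 a2 β β' γ γ'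
    rw [hvP, hwQ] at h
    simp only [vecMulVec_apply, Pi.star_apply, RCLike.star_def] at h
    have l1 : v (a1,β) * conj (w (β',γ')) * T a2 γ
        = ∑ β'' : b, v (a1,β) * conj (v (a2,β'')) * (w (β'',γ) * conj (w (β',γ'))) := by
      rw [show T a2 γ = ∑ β'' : b, conj (v (a2,β'')) * w (β'',γ) from rfl, Finset.mul_sum]
      exact Finset.sum_congr rfl fun β'' _ => by ring
    have r1 : conj (v (a2,β')) * w (β,γ) * conj (T a1 γ')
        = ∑ β'' : b, w (β,γ) * conj (w (β'',γ')) * (v (a1,β'') * conj (v (a2,β'))) := by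
      rw [show conj (T a1 γ') = ∑ β'' : b, v (a1,β'') * conj (w (β'',γ')) from by
        simp only [hT, map_sum, _root_.map_mul, Complex.conj_conj], Finset.mul_sum]
      exact Finset.sum_congr rfl fun β'' _ => by ring
    rw [l1, r1]
    exact h
  set H : a → a → ℂ := fun a2 a1 => ∑ γ', T a2 γ' * conj (T a1 γ') with hH
  have hG : ∀ (a1 : a) (β : b) (a2 : a) (γ : c),
      v (a1,β) * T a2 γ = w (β,γ) * H a2 a1 := by
    intro a1 β a2 γ
    have hsum : ∑ β' : b, ∑ γ' : c, (v (a1,β) * conj (w (β',γ')) * T a2 γ) * w (β',γ')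
        = ∑ β' : b, ∑ γ' : c, (conj (v (a2,β')) * w (β,γ) * conj (T a1 γ')) * w (β',γ') :=
      Finset.sum_congr rfl fun β' _ => Finset.sum_congr rfl fun γ' _ => by
        rw [hE' a1 a2 β β' γ γ']
    have hl : ∑ β' : b, ∑ γ' : c, (v (a1,β) * conj (w (β',γ')) * T a2 γ) * w (β',γ')
        = v (a1,β) * T a2 γ := by
      have heq : ∑ β' : b, ∑ γ' : c, (v (a1,β) * conj (w (β',γ')) * T a2 γ) * w (β',γ')
          = (v (a1,β) * T a2 γ) * (star w ⬝ᵥ w) := by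
        rw [dotProduct, Fintype.sum_prod_type, Finset.mul_sum]
        refine Finset.sum_congr rfl fun β' _ => ?_
        rw [Finset.mul_sum]
        refine Finset.sum_congr rfl fun γ' _ => ?_
        simp only [Pi.star_apply, RCLike.star_def]
        ring
      rw [heq, hw1, mul_one]
    have hr : ∑ β' : b, ∑ γ' : c, (conj (v (a2,β')) * w (β,γ) * conj (T a1 γ')) * w (β',γ')
        = w (β,γ) * H a2 a1 := by
      rw [Finset.sum_comm]
      rw [show H a2 a1 = ∑ γ', T a2 γ' * conj (T a1 γ') from rfl, Finset.mul_sum]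
      refine Finset.sum_congr rfl fun γ' _ => ?_
      rw [show T a2 γ' = ∑ β' : b, conj (v (a2,β')) * w (β',γ') from rfl]
      rw [show (w (β,γ) * ((∑ β' : b, conj (v (a2,β')) * w (β',γ')) * conj (T a1 γ')))
          = ∑ β' : b, w (β,γ) * ((conj (v (a2,β')) * w (β',γ')) * conj (T a1 γ')) from by
        rw [Finset.sum_mul, Finset.mul_sum]]
      exact Finset.sum_congr rfl fun β' _ => by ring
    rw [← hl, hsum, hr]
  by_cases hTz : ∀ (a1 : a) (γ : c), T a1 γ = 0
  · -- reducing case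
    have horth : ∀ a1 γ, star (fun β => v (a1,β)) ⬝ᵥ (fun β => w (β,γ)) = 0 := by
      intro a1 γ
      have h0 := hTz a1 γ
      rw [hT] at h0
      simpa [dotProduct] using h0
    obtain ⟨Pr, hPrh, hPri, hfix, hkill⟩ := RKexists_projection
      (fun a1 => fun β => v (a1,β)) (fun γ => fun β => w (β,γ)) horth
    have hherm1 : ((1 : Matrix a a ℂ) ⊗ₖ Pr).IsHermitian :=
      RKkron_herm Matrix.isHermitian_one hPrh
    have hherm2 : (Pr ⊗ₖ (1 : Matrix c c ℂ)).IsHermitian :=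
      RKkron_herm hPrh Matrix.isHermitian_one
    have hkv : ((1 : Matrix a a ℂ) ⊗ₖ Pr) *ᵥ v = v := by
      funext x
      obtain ⟨a1, β⟩ := x
      show (∑ y : a × b, ((1 : Matrix a a ℂ) ⊗ₖ Pr) (a1,β) y * v y) = v (a1,β)
      rw [Fintype.sum_prod_type]
      have hrow : ∀ a2 : a, ∑ β' : b, ((1 : Matrix a a ℂ) ⊗ₖ Pr) (a1,β) (a2,β') * v (a2,β')
          = if a1 = a2 then ∑ β' : b, Pr β β' * v (a2,β') else 0 := by
        intro a2
        split
        · next h =>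
            subst h
            refine Finset.sum_congr rfl fun β' _ => ?_
            simp [kroneckerMap_apply, Matrix.one_apply]
        · next h =>
            refine Finset.sum_eq_zero fun β' _ => ?_
            simp [kroneckerMap_apply, Matrix.one_apply, h]
      rw [Finset.sum_congr rfl fun a2 _ => hrow a2, Finset.sum_ite_eq,
        if_pos (Finset.mem_univ _)]
      exact congrFun (hfix a1) β
    have hkw : (Pr ⊗ₖ (1 : Matrix c c ℂ)) *ᵥ w = 0 := by
      funext x
      obtain ⟨β, γ⟩ := x
      show (∑ y : b × c, (Pr ⊗ₖ (1 : Matrix c c ℂ)) (β,γ) y * w y) = 0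
      rw [Fintype.sum_prod_type]
      have hrow : ∀ β' : b, ∑ γ' : c, (Pr ⊗ₖ (1 : Matrix c c ℂ)) (β,γ) (β',γ') * w (β',γ')
          = Pr β β' * w (β',γ) := by
        intro β'
        rw [Finset.sum_eq_single γ]
        · simp [kroneckerMap_apply, Matrix.one_apply]
        · intro γ' _ hγ; simp [kroneckerMap_apply, Matrix.one_apply, Ne.symm hγ]
        · intro hγ; exact absurd (Finset.mem_univ γ) hγ
      rw [Finset.sum_congr rfl fun β' _ => hrow β']
      exact congrFun (hkill γ) β
    have hred : ∃ Pr : Matrix b b ℂ, Pr.IsHermitian ∧ Pr * Pr = Pr ∧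
        ((1 : Matrix a a ℂ) ⊗ₖ Pr) * P * ((1 : Matrix a a ℂ) ⊗ₖ Pr) = P ∧
        (Pr ⊗ₖ (1 : Matrix c c ℂ)) * Q * (Pr ⊗ₖ (1 : Matrix c c ℂ)) = 0 := by
      refine ⟨Pr, hPrh, hPri, ?_, ?_⟩
      · rw [hvP, RKsandwich_herm _ hherm1 v, hkv]
      · rw [hwQ, RKsandwich_herm _ hherm2 w, hkw]
        ext i j
        simp [vecMulVec_apply]
    exact Or.inr ⟨hred, fun hsing => RKsingular_not_reducing P Q hsing hred⟩
  · -- singular case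
    push_neg at hTz
    obtain ⟨a₀, γ₀, hT0⟩ := hTz
    have hH0 : H a₀ a₀ ≠ 0 := by
      have hval : H a₀ a₀ = ((∑ γ', Complex.normSq (T a₀ γ') : ℝ) : ℂ) := by
        rw [hH]
        push_cast
        exact Finset.sum_congr rfl fun γ' _ => (Complex.mul_conj (T a₀ γ')).symm ▸ rfl
      rw [hval, Complex.ofReal_ne_zero]
      have hpos : 0 < ∑ γ', Complex.normSq (T a₀ γ') :=
        Finset.sum_pos' (fun γ' _ => Complex.normSq_nonneg _)
          ⟨γ₀, Finset.mem_univ _, Complex.normSq_pos.mpr hT0⟩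
      exact ne_of_gt hpos
    set ψ : b → ℂ := fun β => w (β, γ₀) with hψ
    set x : a → ℂ := fun a1 => H a₀ a1 / T a₀ γ₀ with hx
    set z : c → ℂ := fun γ => x a₀ * T a₀ γ / H a₀ a₀ with hz
    have hvfac : ∀ (a1 : a) (β : b), v (a1,β) = x a1 * ψ β := by
      intro a1 β
      have h := hG a1 β a₀ γ₀
      simp only [hx, hψ]
      field_simp
      linear_combination h
    have hwfac : ∀ (β : b) (γ : c), w (β,γ) = ψ β * z γ := by
      intro β γ
      have h := hG a₀ β a₀ γ
      rw [hvfac a₀ β] at h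
      simp only [hx, hψ] at h
      simp only [hz, hx, hψ]
      field_simp [hT0, hH0] at h ⊢
      linear_combination (-1 : ℂ) * h
    set tR : ℝ := ∑ β, Complex.normSq (ψ β) with htR
    have ht : (star ψ ⬝ᵥ ψ : ℂ) = (tR : ℝ) := by
      rw [dotProduct, htR]
      push_cast
      exact Finset.sum_congr rfl fun β _ => by
        simp [Complex.normSq_eq_conj_mul_self]
    have hx1 : (star x ⬝ᵥ x) * (tR : ℂ) = 1 := by
      rw [← hv1, ← ht]
      rw [dotProduct, dotProduct, dotProduct, Fintype.sum_prod_type, Finset.sum_mul]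
      refine Finset.sum_congr rfl fun a1 _ => ?_
      rw [Finset.mul_sum]
      refine Finset.sum_congr rfl fun β _ => ?_
      simp only [Pi.star_apply, RCLike.star_def, hvfac a1 β, _root_.map_mul]
      ring
    have hz1 : (tR : ℂ) * (star z ⬝ᵥ z) = 1 := by
      rw [← hw1, ← ht]
      rw [dotProduct, dotProduct, dotProduct, Fintype.sum_prod_type, Finset.sum_mul]
      refine Finset.sum_congr rfl fun β _ => ?_
      rw [Finset.mul_sum]
      refine Finset.sum_congr rfl fun γ _ => ?_
      simp only [Pi.star_apply, RCLike.star_def, hwfac β γ, _root_.map_mul]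
      ring
    have htRne : (tR : ℂ) ≠ 0 := by
      intro h; rw [h, mul_zero] at hx1; exact zero_ne_one hx1
    have htRnonneg : 0 ≤ tR := Finset.sum_nonneg fun β _ => Complex.normSq_nonneg _
    set s : ℝ := Real.sqrt tR with hsdef
    have hs2 : (s : ℂ) * s = (tR : ℂ) := by
      rw [← Complex.ofReal_mul, Real.mul_self_sqrt htRnonneg]
    have hsne : (s : ℂ) ≠ 0 := fun h => htRne (by rw [← hs2, h, mul_zero])
    set ψ' : b → ℂ := ((s : ℂ))⁻¹ • ψ with hψ'
    set x' : a → ℂ := ((s : ℂ)) • x with hx'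
    set z' : c → ℂ := ((s : ℂ)) • z with hz'
    have hψ'1 : star ψ' ⬝ᵥ ψ' = 1 := by
      rw [hψ', star_smul, smul_dotProduct, dotProduct_smul, ht]
      simp only [star_inv₀, RCLike.star_def, Complex.conj_ofReal, smul_eq_mul]
      rw [← hs2]
      field_simp
    have hx'1 : star x' ⬝ᵥ x' = 1 := by
      rw [hx', star_smul, smul_dotProduct, dotProduct_smul]
      simp only [RCLike.star_def, Complex.conj_ofReal, smul_eq_mul]
      rw [show ((s:ℂ) * ((s:ℂ) * (star x ⬝ᵥ x))) = ((s:ℂ) * (s:ℂ)) * (star x ⬝ᵥ x) from by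
        ring, hs2]
      linear_combination hx1
    have hz'1 : star z' ⬝ᵥ z' = 1 := by
      rw [hz', star_smul, smul_dotProduct, dotProduct_smul]
      simp only [RCLike.star_def, Complex.conj_ofReal, smul_eq_mul]
      rw [show ((s:ℂ) * ((s:ℂ) * (star z ⬝ᵥ z))) = ((s:ℂ) * (s:ℂ)) * (star z ⬝ᵥ z) from by
        ring, hs2]
      linear_combination hz1
    have hPfac : P = vecMulVec x' (star x') ⊗ₖ vecMulVec ψ' (star ψ') := by
      rw [hvP]
      ext ⟨a1,β⟩ ⟨a2,β'⟩
      simp only [vecMulVec_apply, kroneckerMap_apply, Pi.star_apply, Pi.smul_apply,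
        smul_eq_mul, RCLike.star_def, _root_.map_mul, map_inv₀, Complex.conj_ofReal, hψ', hx']
      rw [hvfac a1 β, hvfac a2 β']
      rw [_root_.map_mul]
      field_simp
    have hQfac : Q = vecMulVec ψ' (star ψ') ⊗ₖ vecMulVec z' (star z') := by
      rw [hwQ]
      ext ⟨β,γ⟩ ⟨β',γ'⟩
      simp only [vecMulVec_apply, kroneckerMap_apply, Pi.star_apply, Pi.smul_apply,
        smul_eq_mul, RCLike.star_def, _root_.map_mul, map_inv₀, Complex.conj_ofReal, hψ', hz']
      rw [hwfac β γ, hwfac β' γ']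
      rw [_root_.map_mul]
      field_simp
    have hsing : ∃ (ψ : b → ℂ) (Pt : Matrix a a ℂ) (Qt : Matrix c c ℂ),
        star ψ ⬝ᵥ ψ = 1 ∧ Pt.IsHermitian ∧ Pt * Pt = Pt ∧ Pt.rank = 1 ∧
        Qt.IsHermitian ∧ Qt * Qt = Qt ∧ Qt.rank = 1 ∧
        P = Pt ⊗ₖ vecMulVec ψ (star ψ) ∧ Q = vecMulVec ψ (star ψ) ⊗ₖ Qt :=
      ⟨ψ', vecMulVec x' (star x'), vecMulVec z' (star z'), hψ'1,
        RKvecMulVec_herm x', RKvecMulVec_idem x' hx'1, RKvecMulVec_rank_one x' hx'1,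
        RKvecMulVec_herm z', RKvecMulVec_idem z' hz'1, RKvecMulVec_rank_one z' hz'1,
        hPfac, hQfac⟩
    exact Or.inl ⟨hsing, fun hred => RKsingular_not_reducing P Q hsing hred⟩
end

section
/- Let P̃ and Q̃ be Hermitian projectors on a finite-dimensional Hilbert space, with Jordan decomposition P̃Q̃ = Σ_b η_b |p_b⟩⟨q_b| where, within each two-dimensional Jordan block b, P̃ projects onto |p_b⟩ and Q̃ projects onto |q_b⟩ with ⟨p_b|q_b⟩ = √η_b ≥ 0. If a Hermitian operator h commutes with both P̃ and Q̃, then h commutes with Σ_{b : η_b > 0} |p_b⟩⟨p_b|. -/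
open Matrix Polynomial

lemma vmv_mul_s12 {d : Type*} [Fintype d] (a b c e : d → ℂ) :
    vecMulVec a b * vecMulVec c e = (b ⬝ᵥ c) • vecMulVec a e := by
  ext i j
  simp only [mul_apply, vecMulVec_apply, Matrix.smul_apply, dotProduct, smul_eq_mul,
    Finset.sum_mul, Finset.mul_sum]
  congr 1; ext k; ring

lemma vmv_conjT {d : Type*} [Fintype d] (a b : d → ℂ) :
    (vecMulVec a (star b))ᴴ = vecMulVec b (star a) := by
  ext i j
  simp [vecMulVec_apply, conjTranspose_apply, mul_comm]

lemma exists_poly (T : Finset ℂ) (hT : (0:ℂ) ∉ T) :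
    ∃ f : ℂ[X], f.eval 0 = 0 ∧ ∀ t ∈ T, f.eval t = 1 := by
  refine ⟨Lagrange.interpolate (insert 0 T) id (fun x => if x = 0 then 0 else 1), ?_, ?_⟩
  · have := Lagrange.eval_interpolate_at_node (v := id) (s := insert 0 T)
      (r := fun x => if x = 0 then 0 else 1) (i := 0) Function.injective_id.injOn
      (Finset.mem_insert_self _ _)
    simpa using this
  · intro t ht
    have hne : t ≠ 0 := fun h => hT (h ▸ ht)
    have := Lagrange.eval_interpolate_at_node (v := id) (s := insert 0 T)
      (r := fun x => if x = 0 then 0 else 1) (i := t) Function.injective_id.injOn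
      (Finset.mem_insert_of_mem ht)
    simpa [hne] using this

/-- in the Jordan-block setting for a pair of projectors `P̃, Q̃`, any
Hermitian `h` commuting with both `P̃` and `Q̃` commutes with
`Σ_{b : η_b > 0} |p_b⟩⟨p_b|`. -/
theorem jordan_positive_part_commutes {d : Type*} [Fintype d] [DecidableEq d]
    {ι : Type*} [Fintype ι] [DecidableEq ι]
    (P Q : Matrix d d ℂ)
    (hPh : P.IsHermitian) (hPi : P * P = P)
    (hQh : Q.IsHermitian) (hQi : Q * Q = Q)
    (η : ι → ℝ) (hη0 : ∀ b, 0 ≤ η b) (hη1 : ∀ b, η b ≤ 1)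
    (p q : ι → d → ℂ)
    (hpon : ∀ b b', star (p b) ⬝ᵥ p b' = if b = b' then 1 else 0)
    (hqon : ∀ b b', star (q b) ⬝ᵥ q b' = if b = b' then 1 else 0)
    (hPp : ∀ b, P.mulVec (p b) = p b)
    (hQq : ∀ b, Q.mulVec (q b) = q b)
    (hoverlap : ∀ b, star (p b) ⬝ᵥ q b = (Real.sqrt (η b) : ℂ))
    (hPQ : P * Q = ∑ b, (η b : ℂ) • vecMulVec (p b) (star (q b)))
    (h : Matrix d d ℂ) (hh : h.IsHermitian)
    (hhP : h * P = P * h) (hhQ : h * Q = Q * h) :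
    h * (∑ b ∈ Finset.univ.filter fun b => 0 < η b, vecMulVec (p b) (star (p b)))
      = (∑ b ∈ Finset.univ.filter fun b => 0 < η b, vecMulVec (p b) (star (p b))) * h := by
  classical
  set V : ι → Matrix d d ℂ := fun b => vecMulVec (p b) (star (p b)) with hV
  set M : Matrix d d ℂ := (P * Q) * (Q * P) with hMdef
  -- M = Σ η² V
  have hM : M = ∑ b, ((η b : ℂ)^2) • V b := by
    have hct : (P * Q)ᴴ = Q * P := by
      rw [conjTranspose_mul, hPh.eq, hQh.eq]
    rw [hMdef, ← hct, hPQ, conjTranspose_sum]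
    have hterm : ∀ b : ι, ((η b : ℂ) • vecMulVec (p b) (star (q b)))ᴴ
        = (η b : ℂ) • vecMulVec (q b) (star (p b)) := by
      intro b
      rw [conjTranspose_smul, vmv_conjT]
      congr 1
      simp [Complex.star_def, Complex.conj_ofReal]
    simp_rw [hterm]
    rw [Finset.sum_mul_sum]
    have hkey : ∀ b b' : ι,
        ((η b : ℂ) • vecMulVec (p b) (star (q b))) * ((η b' : ℂ) • vecMulVec (q b') (star (p b')))
        = if b = b' then ((η b : ℂ)^2) • V b else 0 := by
      intro b b'
      rw [Matrix.smul_mul, Matrix.mul_smul, vmv_mul_s12, hqon]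
      by_cases hbb : b = b'
      · subst hbb
        rw [if_pos rfl, if_pos rfl, one_smul, smul_smul, ← sq]
      · simp [hbb]
    calc (∑ b, ∑ b', ((η b : ℂ) • vecMulVec (p b) (star (q b)))
            * ((η b' : ℂ) • vecMulVec (q b') (star (p b'))))
        = ∑ b, ∑ b', if b = b' then ((η b : ℂ)^2) • V b else 0 := by
          refine Finset.sum_congr rfl fun b _ => Finset.sum_congr rfl fun b' _ => hkey b b'
      _ = ∑ b, ((η b : ℂ)^2) • V b := by
          refine Finset.sum_congr rfl fun b _ => ?_
          simp
  -- powers of M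
  have hkeyp : ∀ (x y : ι → ℂ) (b b' : ι),
      (x b • V b) * (y b' • V b') = if b = b' then (x b * y b) • V b else 0 := by
    intro x y b b'
    rw [Matrix.smul_mul, Matrix.mul_smul, hV]
    simp only
    rw [vmv_mul_s12, hpon]
    by_cases hbb : b = b'
    · subst hbb; simp [smul_smul]
    · simp [hbb]
  have hMpow : ∀ n : ℕ, M ^ (n + 1) = ∑ b, (((η b : ℂ)^2)^(n+1)) • V b := by
    intro n
    induction n with
    | zero => simpa using hM
    | succ n ih =>
      rw [pow_succ, ih, hM, Finset.sum_mul_sum]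
      calc (∑ b, ∑ b', ((((η b : ℂ)^2)^(n+1)) • V b) * (((η b' : ℂ)^2) • V b'))
          = ∑ b, ∑ b', if b = b' then ((((η b : ℂ)^2)^(n+1)) * ((η b : ℂ)^2)) • V b else 0 := by
            refine Finset.sum_congr rfl fun b _ => Finset.sum_congr rfl fun b' _ =>
              hkeyp (fun b => ((η b : ℂ)^2)^(n+1)) (fun b => ((η b : ℂ)^2)) b b'
        _ = ∑ b, (((η b : ℂ)^2)^(n+2)) • V b := by
            refine Finset.sum_congr rfl fun b _ => ?_
            simp [pow_succ]
  -- the interpolating polynomial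
  obtain ⟨f, hf0, hf1⟩ := exists_poly
      ((Finset.univ.filter fun b => 0 < η b).image fun b => ((η b : ℂ)^2))
      (by
        simp only [Finset.mem_image, Finset.mem_filter, Finset.mem_univ, true_and, not_exists]
        rintro b ⟨hb, h0⟩
        have h2 : (η b)^2 = 0 := by exact_mod_cast h0
        nlinarith)
  have hf1' : ∀ b : ι, 0 < η b → f.eval ((η b : ℂ)^2) = 1 := by
    intro b hb
    exact hf1 _ (Finset.mem_image_of_mem _ (by simp [hb]))
  -- f(M) = the positive-part sum
  have c0 : f.coeff 0 = 0 := by rwa [coeff_zero_eq_eval_zero]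
  have haeval : (aeval M) f
      = ∑ b ∈ Finset.univ.filter fun b => 0 < η b, V b := by
    rw [aeval_eq_sum_range]
    have step : ∀ i ∈ Finset.range (f.natDegree + 1),
        f.coeff i • M ^ i = ∑ b, (f.coeff i * ((η b : ℂ)^2)^i) • V b := by
      intro i _
      cases i with
      | zero => simp [c0]
      | succ n =>
        rw [hMpow n, Finset.smul_sum]
        refine Finset.sum_congr rfl fun b _ => ?_
        rw [smul_smul]
    rw [Finset.sum_congr rfl step, Finset.sum_comm]
    have colsum : ∀ b : ι,
        (∑ i ∈ Finset.range (f.natDegree + 1), (f.coeff i * ((η b : ℂ)^2)^i) • V b)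
        = f.eval ((η b : ℂ)^2) • V b := by
      intro b
      rw [← Finset.sum_smul, eval_eq_sum_range]
    rw [Finset.sum_congr rfl fun b _ => colsum b]
    rw [← Finset.sum_filter_add_sum_filter_not Finset.univ (fun b => 0 < η b)]
    have h1 : (∑ b ∈ Finset.univ.filter fun b => 0 < η b, f.eval ((η b : ℂ)^2) • V b)
        = ∑ b ∈ Finset.univ.filter fun b => 0 < η b, V b := by
      refine Finset.sum_congr rfl fun b hb => ?_
      rw [hf1' b (by simpa using hb), one_smul]
    have h2 : (∑ b ∈ Finset.univ.filter fun b => ¬ 0 < η b, f.eval ((η b : ℂ)^2) • V b) = 0 := by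
      refine Finset.sum_eq_zero fun b hb => ?_
      have hb0 : η b = 0 := le_antisymm (not_lt.mp (by simpa using hb)) (hη0 b)
      rw [hb0]
      simp [hf0]
    rw [h1, h2, add_zero]
  -- h commutes with M, hence with f(M)
  have hcomm : Commute h M :=
    (Commute.mul_right hhP hhQ).mul_right (Commute.mul_right hhQ hhP)
  have hfcomm : Commute h ((aeval M) f) := by
    rw [aeval_eq_sum_range]
    exact Commute.sum_right _ _ _ fun i _ => (hcomm.pow_right i).smul_right _
  have := hfcomm
  rw [haeval] at this
  exact this
end
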